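/- arXiv:2404.17694 — 5 statements merged into one kernel-verified Lean document; each statement's English description precedes it below -/
import Mathlib

section
/- For every real number x with |x| < 1, one has arcsin(x)²/(2(1−x)) = Σ_{n=0}^∞ c_n xⁿ, where c_n = Σ_{j ≥ 0, 2j+2 ≤ n} ((2j)!!)²/(2j+2)! (an empty sum being 0). In particular, for even n ≥ 2 the coefficient of xⁿ in the exponential generating function of arcsin(x)²/(2(1−x)) is n! · Σ_{j=0}^{(n−2)/2} ((2j)!!/(2j+1)!!) · (1/(2j+2)). -/
open Real Filter Finset

noncomputable def bbA (j : ℕ) : ℝ :=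
  (Nat.doubleFactorial (2 * j) : ℝ) / (Nat.doubleFactorial (2 * j + 1) : ℝ)

noncomputable def aaA (j : ℕ) : ℝ :=
  (Nat.doubleFactorial (2 * j) : ℝ) ^ 2 / (Nat.factorial (2 * j + 2) : ℝ)

lemma dfac_le (j : ℕ) : Nat.doubleFactorial (2 * j) ≤ Nat.doubleFactorial (2 * j + 1) := by
  induction j with
  | zero => simp [Nat.doubleFactorial]
  | succ n ih =>
      have h1 : 2 * (n + 1) = 2 * n + 2 := by ring
      have h2 : 2 * (n + 1) + 1 = 2 * n + 1 + 2 := by ring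
      rw [h1]
      have h2 : 2 * n + 2 + 1 = 2 * n + 1 + 2 := by ring
      rw [h2, Nat.doubleFactorial_add_two, Nat.doubleFactorial_add_two]
      exact Nat.mul_le_mul (by omega) ih

lemma bbA_pos (j : ℕ) : 0 < bbA j := by
  apply div_pos <;> exact_mod_cast Nat.doubleFactorial_pos _

lemma bbA_le_one (j : ℕ) : bbA j ≤ 1 := by
  rw [bbA, div_le_one (by exact_mod_cast Nat.doubleFactorial_pos _)]
  exact_mod_cast dfac_le j

lemma aaA_eq (j : ℕ) : aaA j = bbA j * (1 / (2 * (j : ℝ) + 2)) := by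
  have hf : ((2 * j + 2).factorial : ℝ)
      = (2 * (j:ℝ) + 2) * (Nat.doubleFactorial (2 * j) : ℝ)
        * (Nat.doubleFactorial (2 * j + 1) : ℝ) := by
    have : (2 * j + 1) + 1 = 2 * j + 2 := by ring
    rw [← this, Nat.factorial_eq_mul_doubleFactorial]
    have : (2 * j + 1) + 1 = 2 * j + 2 := by ring
    rw [this]
    have : (2 * j + 2) = 2 * j + 2 := rfl
    rw [Nat.doubleFactorial_add_two]
    push_cast
    ring
  rw [aaA, bbA, hf]
  have h1 : (Nat.doubleFactorial (2 * j) : ℝ) ≠ 0 := by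
    exact_mod_cast (Nat.doubleFactorial_pos _).ne'
  have h2 : (Nat.doubleFactorial (2 * j + 1) : ℝ) ≠ 0 := by
    exact_mod_cast (Nat.doubleFactorial_pos _).ne'
  have h3 : (2 * (j:ℝ) + 2) ≠ 0 := by positivity
  have h4 : ((2*j+2 : ℕ) : ℝ) = 2 * (j:ℝ) + 2 := by push_cast; ring
  field_simp

lemma aaA_pos (j : ℕ) : 0 < aaA j := by
  rw [aaA_eq]; exact mul_pos (bbA_pos j) (by positivity)

lemma aaA_le_one (j : ℕ) : aaA j ≤ 1 := by
  rw [aaA_eq]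
  calc bbA j * (1 / (2 * (j:ℝ) + 2)) ≤ 1 * 1 := by
        apply mul_le_mul (bbA_le_one j) ?_ (by positivity) zero_le_one
        rw [div_le_one (by positivity)]; nlinarith [Nat.cast_nonneg (α := ℝ) j]
    _ = 1 := one_mul 1

lemma aaA_mul (j : ℕ) : aaA j * (2 * (j:ℝ) + 2) = bbA j := by
  rw [aaA_eq]
  have : (2 * (j:ℝ) + 2) ≠ 0 := by positivity
  field_simp

lemma bbA_rec (j : ℕ) : bbA j * (2 * (j:ℝ) + 1) + bbA j = bbA (j+1) * (2 * ((j:ℝ)+1) + 1) := by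
  have h1 : 2 * (j + 1) = 2 * j + 2 := by ring
  have h2 : 2 * (j + 1) + 1 = 2 * j + 1 + 2 := by ring
  rw [bbA, bbA, h1]
  have h2' : 2 * j + 2 + 1 = 2 * j + 1 + 2 := by ring
  rw [h2', Nat.doubleFactorial_add_two, Nat.doubleFactorial_add_two]
  have ha : (Nat.doubleFactorial (2 * j + 1) : ℝ) ≠ 0 := by
    exact_mod_cast (Nat.doubleFactorial_pos _).ne'
  have hb : ((2 * j + 1 + 2 : ℕ) : ℝ) ≠ 0 := by positivity
  push_cast
  field_simp
  ring

lemma summable_aux {r : ℝ} (hr0 : 0 ≤ r) (hr : r < 1) (m : ℕ) :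
    Summable (fun j : ℕ => (2 * (j:ℝ) + 3) * r ^ (2 * j + m)) := by
  have hr2 : r ^ 2 < 1 := by nlinarith
  have hr2' : ‖r ^ 2‖ < 1 := by rw [Real.norm_eq_abs, abs_of_nonneg (by positivity)]; exact hr2
  have h1 : Summable (fun j : ℕ => (2 * (j:ℝ) + 3) * (r ^ 2) ^ j) := by
    have ha := (summable_pow_mul_geometric_of_norm_lt_one 1 hr2' (R := ℝ)).mul_left 2
    have hb := (summable_geometric_of_lt_one (by positivity) hr2).mul_left 3
    have := ha.add hb
    refine this.congr fun j => ?_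
    push_cast; ring
  have h2 := h1.mul_right (r ^ m)
  refine h2.congr fun j => ?_
  rw [pow_add, pow_mul]
  ring

lemma summable_coeff {c : ℕ → ℝ} (hc : ∀ j, |c j| ≤ 2 * (j:ℝ) + 3) {x : ℝ} (hx : |x| < 1)
    (m : ℕ) : Summable (fun j : ℕ => c j * x ^ (2 * j + m)) := by
  refine Summable.of_norm ?_
  refine Summable.of_nonneg_of_le (fun j => norm_nonneg _)
    (fun j => ?_) (summable_aux (abs_nonneg x) hx m)
  rw [norm_mul, norm_pow, Real.norm_eq_abs, Real.norm_eq_abs]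
  exact mul_le_mul (hc j) (pow_le_pow_left₀ (abs_nonneg x) le_rfl _) (by positivity)
    (by positivity)

lemma hasDerivAt_series {c : ℕ → ℝ} (hc : ∀ j, |c j| ≤ 1) {x : ℝ} (hx : |x| < 1)
    (m : ℕ) (hm : 1 ≤ m) (hm3 : m ≤ 3) :
    HasDerivAt (fun y : ℝ => ∑' j : ℕ, c j * y ^ (2 * j + m))
      (∑' j : ℕ, c j * (2 * (j:ℝ) + (m:ℝ)) * x ^ (2 * j + m - 1)) x := by
  set r : ℝ := (1 + |x|) / 2 with hrdef
  have hr0 : 0 < r := by positivity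
  have hxr : |x| < r := by rw [hrdef]; linarith
  have hr1 : r < 1 := by rw [hrdef]; linarith
  set t : Set ℝ := Metric.ball (0:ℝ) r with htdef
  have hxt : x ∈ t := by simpa [htdef, Real.norm_eq_abs] using hxr
  have h0t : (0:ℝ) ∈ t := by simpa [htdef] using hr0
  have key : ∀ j : ℕ, 2 * j + m - 1 = 2 * j + (m - 1) := fun j => by omega
  have hu : Summable (fun j : ℕ => (2 * (j:ℝ) + (m:ℝ)) * r ^ (2 * j + m - 1)) := by
    refine Summable.of_nonneg_of_le (fun j => by positivity) (fun j => ?_)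
      (summable_aux hr0.le hr1 (m - 1))
    rw [key]
    apply mul_le_mul_of_nonneg_right _ (by positivity)
    have : (m : ℝ) ≤ 3 := by exact_mod_cast hm3
    linarith
  have hderiv : ∀ (j : ℕ) (y : ℝ), y ∈ t →
      HasDerivAt (fun z : ℝ => c j * z ^ (2 * j + m))
        (c j * (2 * (j:ℝ) + (m:ℝ)) * y ^ (2 * j + m - 1)) y := by
    intro j y _
    have h := (hasDerivAt_pow (2 * j + m) y).const_mul (c j)
    have hcast : ((2 * j + m : ℕ) : ℝ) = 2 * (j:ℝ) + (m:ℝ) := by push_cast; ring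
    rw [← mul_assoc, hcast] at h
    exact h
  have hbound : ∀ (j : ℕ) (y : ℝ), y ∈ t →
      ‖c j * (2 * (j:ℝ) + (m:ℝ)) * y ^ (2 * j + m - 1)‖
        ≤ (2 * (j:ℝ) + (m:ℝ)) * r ^ (2 * j + m - 1) := by
    intro j y hy
    have hyr : |y| ≤ r := by
      have : dist y 0 < r := hy
      rw [Real.dist_eq, sub_zero] at this; exact this.le
    rw [norm_mul, norm_mul, norm_pow, Real.norm_eq_abs, Real.norm_eq_abs, Real.norm_eq_abs]
    have hmn : (0:ℝ) ≤ 2 * (j:ℝ) + (m:ℝ) := by positivity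
    rw [abs_of_nonneg hmn]
    calc |c j| * (2 * (j:ℝ) + (m:ℝ)) * |y| ^ (2 * j + m - 1)
        ≤ 1 * (2 * (j:ℝ) + (m:ℝ)) * r ^ (2 * j + m - 1) := by
          apply mul_le_mul (mul_le_mul_of_nonneg_right (hc j) hmn)
            (pow_le_pow_left₀ (abs_nonneg y) hyr _) (by positivity) (by positivity)
      _ = (2 * (j:ℝ) + (m:ℝ)) * r ^ (2 * j + m - 1) := by ring
  have hsum0 : Summable (fun j : ℕ => c j * (0:ℝ) ^ (2 * j + m)) := by
    have : (fun j : ℕ => c j * (0:ℝ) ^ (2 * j + m)) = fun _ => 0 := by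
      funext j
      rw [zero_pow (by omega), mul_zero]
    rw [this]
    exact summable_zero
  exact hasDerivAt_tsum_of_isPreconnected hu Metric.isOpen_ball
    (convex_ball (0:ℝ) r).isPreconnected hderiv hbound h0t hsum0 hxt
lemma bbA_zero : bbA 0 = 1 := by simp [bbA, Nat.doubleFactorial]

lemma key_identity {x : ℝ} (hx : |x| < 1) :
    (1 - x ^ 2) * (∑' j : ℕ, bbA j * (2 * (j:ℝ) + 1) * x ^ (2 * j))
      - x * (∑' j : ℕ, bbA j * x ^ (2 * j + 1)) = 1 := by
  have hb1 : ∀ j : ℕ, |bbA j * (2 * (j:ℝ) + 1)| ≤ 2 * (j:ℝ) + 3 := by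
    intro j
    rw [abs_mul, abs_of_pos (bbA_pos j), abs_of_nonneg (by positivity)]
    nlinarith [bbA_le_one j, bbA_pos j, Nat.cast_nonneg (α := ℝ) j]
  have hb2 : ∀ j : ℕ, |bbA j| ≤ 2 * (j:ℝ) + 3 := by
    intro j
    rw [abs_of_pos (bbA_pos j)]
    nlinarith [bbA_le_one j, Nat.cast_nonneg (α := ℝ) j]
  have hS1 : Summable (fun j : ℕ => bbA j * (2 * (j:ℝ) + 1) * x ^ (2 * j)) := by
    have := summable_coeff hb1 hx 0
    exact this.congr fun j => by norm_num
  have hS2 : Summable (fun j : ℕ => bbA j * (2 * (j:ℝ) + 1) * x ^ (2 * j + 2)) :=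
    summable_coeff hb1 hx 2
  have hS3 : Summable (fun j : ℕ => bbA j * x ^ (2 * j + 2)) := summable_coeff hb2 hx 2
  have e2 : x ^ 2 * (∑' j : ℕ, bbA j * (2 * (j:ℝ) + 1) * x ^ (2 * j))
      = ∑' j : ℕ, bbA j * (2 * (j:ℝ) + 1) * x ^ (2 * j + 2) := by
    rw [← tsum_mul_left]
    exact tsum_congr fun j => by rw [pow_add]; ring
  have e1 : x * (∑' j : ℕ, bbA j * x ^ (2 * j + 1))
      = ∑' j : ℕ, bbA j * x ^ (2 * j + 2) := by
    rw [← tsum_mul_left]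
    exact tsum_congr fun j => by
      rw [show 2 * j + 2 = (2 * j + 1) + 1 by omega, pow_succ]; ring
  rw [sub_mul, one_mul, e1, sub_sub, e2, ← Summable.tsum_add hS2 hS3]
  have e5 : ∑' j : ℕ, bbA (j+1) * (2 * ((j+1:ℕ):ℝ) + 1) * x ^ (2*(j+1))
      = ∑' j : ℕ, (bbA j * (2 * (j:ℝ) + 1) * x ^ (2 * j + 2)
          + bbA j * x ^ (2 * j + 2)) := by
    refine tsum_congr fun j => ?_
    rw [show 2 * (j + 1) = 2 * j + 2 by omega]
    push_cast
    linear_combination (-(x ^ (2 * j + 2))) * (bbA_rec j)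
  rw [Summable.tsum_eq_zero_add hS1, ← e5]
  simp [bbA_zero]

lemma const_of_deriv {f : ℝ → ℝ} (hf : ∀ y : ℝ, |y| < 1 → HasDerivAt f 0 y)
    {x : ℝ} (hx : |x| < 1) : f x = f 0 := by
  obtain ⟨hx1, hx2⟩ := abs_lt.1 hx
  rcases le_total 0 x with h | h
  · exact constant_of_has_deriv_right_zero
      (f := f) (a := 0) (b := x)
      (fun y hy => (hf y (abs_lt.2 ⟨by linarith [hy.1], by linarith [hy.2]⟩)).continuousAt.continuousWithinAt)
      (fun y hy => (hf y (abs_lt.2 ⟨by linarith [hy.1], by linarith [hy.2.le]⟩)).hasDerivWithinAt)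
      x (by simp [h])
  · exact (constant_of_has_deriv_right_zero
      (f := f) (a := x) (b := 0)
      (fun y hy => (hf y (abs_lt.2 ⟨by linarith [hy.1], by linarith [hy.2]⟩)).continuousAt.continuousWithinAt)
      (fun y hy => (hf y (abs_lt.2 ⟨by linarith [hy.1], by linarith [hy.2.le]⟩)).hasDerivWithinAt)
      0 (by simp [h])).symm
lemma hasDerivAt_U {x : ℝ} (hx : |x| < 1) :
    HasDerivAt (fun y : ℝ => ∑' j : ℕ, bbA j * y ^ (2 * j + 1))
      (∑' j : ℕ, bbA j * (2 * (j:ℝ) + 1) * x ^ (2 * j)) x := by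
  have h := hasDerivAt_series (c := bbA)
    (fun j => by rw [abs_of_pos (bbA_pos j)]; exact bbA_le_one j) hx 1 le_rfl (by norm_num)
  have : (∑' j : ℕ, bbA j * (2 * (j:ℝ) + (1:ℕ)) * x ^ (2 * j + 1 - 1))
      = ∑' j : ℕ, bbA j * (2 * (j:ℝ) + 1) * x ^ (2 * j) := by
    exact tsum_congr fun j => by norm_num
  rwa [this] at h

lemma sqrt_one_sub_sq_pos {x : ℝ} (hx : |x| < 1) : 0 < Real.sqrt (1 - x ^ 2) := by
  have : 0 < 1 - x ^ 2 := by nlinarith [abs_lt.1 hx, abs_nonneg x, sq_abs x]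
  exact Real.sqrt_pos.2 this

lemma U_eq {x : ℝ} (hx : |x| < 1) :
    (∑' j : ℕ, bbA j * x ^ (2 * j + 1)) = Real.arcsin x / Real.sqrt (1 - x ^ 2) := by
  set F : ℝ → ℝ := fun y =>
    (∑' j : ℕ, bbA j * y ^ (2 * j + 1)) * Real.sqrt (1 - y ^ 2) - Real.arcsin y with hF
  have hderiv : ∀ y : ℝ, |y| < 1 → HasDerivAt F 0 y := by
    intro y hy
    obtain ⟨hy1, hy2⟩ := abs_lt.1 hy
    have hs := sqrt_one_sub_sq_pos hy
    have hssq : Real.sqrt (1 - y ^ 2) ^ 2 = 1 - y ^ 2 :=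
      Real.sq_sqrt (by nlinarith)
    have h1 := hasDerivAt_U hy
    have h2 : HasDerivAt (fun z : ℝ => Real.sqrt (1 - z ^ 2))
        (-y / Real.sqrt (1 - y ^ 2)) y := by
      have hinner : HasDerivAt (fun z : ℝ => 1 - z ^ 2) (-(2 * y)) y := by
        simpa using (hasDerivAt_pow 2 y).const_sub 1
      have := (Real.hasDerivAt_sqrt (by nlinarith : 1 - y ^ 2 ≠ 0)).comp y hinner
      refine this.congr_deriv ?_
      field_simp
    have h3 := Real.hasDerivAt_arcsin (by linarith : y ≠ -1) (by linarith : y ≠ 1)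
    have h4 := (h1.mul h2).sub h3
    refine h4.congr_deriv ?_
    have hkey := key_identity hy
    field_simp
    first
    | linear_combination (-1 : ℝ) * hkey
        - (∑' j : ℕ, bbA j * (2 * (j:ℝ) + 1) * y ^ (2 * j)) * hssq
    | linear_combination hkey
        + (∑' j : ℕ, bbA j * (2 * (j:ℝ) + 1) * y ^ (2 * j)) * hssq
  have h0 : F 0 = 0 := by
    simp [hF]
  have := const_of_deriv hderiv hx
  rw [h0] at this
  have hs := sqrt_one_sub_sq_pos hx
  rw [hF] at this
  simp only [sub_eq_zero] at this
  field_simp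
  linarith [this]

lemma hasDerivAt_G {x : ℝ} (hx : |x| < 1) :
    HasDerivAt (fun y : ℝ => ∑' j : ℕ, aaA j * y ^ (2 * j + 2))
      (∑' j : ℕ, bbA j * x ^ (2 * j + 1)) x := by
  have h := hasDerivAt_series (c := aaA)
    (fun j => by rw [abs_of_pos (aaA_pos j)]; exact aaA_le_one j) hx 2 (by norm_num) (by norm_num)
  have : (∑' j : ℕ, aaA j * (2 * (j:ℝ) + (2:ℕ)) * x ^ (2 * j + 2 - 1))
      = ∑' j : ℕ, bbA j * x ^ (2 * j + 1) := by
    refine tsum_congr fun j => ?_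
    rw [show 2 * j + 2 - 1 = 2 * j + 1 by omega]
    rw [show ((2:ℕ):ℝ) = 2 by norm_num, aaA_mul]
  rwa [this] at h

lemma G_eq {x : ℝ} (hx : |x| < 1) :
    (∑' j : ℕ, aaA j * x ^ (2 * j + 2)) = Real.arcsin x ^ 2 / 2 := by
  set W : ℝ → ℝ := fun y =>
    (∑' j : ℕ, aaA j * y ^ (2 * j + 2)) - Real.arcsin y ^ 2 / 2 with hW
  have hderiv : ∀ y : ℝ, |y| < 1 → HasDerivAt W 0 y := by
    intro y hy
    obtain ⟨hy1, hy2⟩ := abs_lt.1 hy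
    have h1 := hasDerivAt_G hy
    have h3 := Real.hasDerivAt_arcsin (by linarith : y ≠ -1) (by linarith : y ≠ 1)
    have h4 : HasDerivAt (fun z : ℝ => Real.arcsin z ^ 2 / 2)
        (Real.arcsin y / Real.sqrt (1 - y ^ 2)) y := by
      have := ((h3.pow 2)).div_const 2
      refine this.congr_deriv ?_
      field_simp
      ring
    have h5 := h1.sub h4
    rw [U_eq hy] at h5
    exact h5.congr_deriv (by simp)
  have h0 : W 0 = 0 := by simp [hW]
  have := const_of_deriv hderiv hx
  rw [h0, hW, sub_eq_zero] at this
  exact this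
noncomputable def AA (n : ℕ) : ℝ :=
  if n % 2 = 0 ∧ 2 ≤ n then aaA ((n - 2) / 2) else 0

lemma AA_two_add (j : ℕ) : AA (2 * j + 2) = aaA j := by
  rw [AA, if_pos (by omega)]
  congr 1
  omega

lemma AA_abs_le_one (n : ℕ) : |AA n| ≤ 1 := by
  rw [AA]
  split_ifs with h
  · rw [abs_of_pos (aaA_pos _)]; exact aaA_le_one _
  · simp

lemma sumAA (n : ℕ) :
    ∑ k ∈ Finset.range (n + 1), AA k
      = ∑ j ∈ Finset.range n, (if 2 * j + 2 ≤ n then aaA j else 0) := by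
  induction n with
  | zero => simp [AA]
  | succ n ih =>
      rw [Finset.sum_range_succ, ih, Finset.sum_range_succ, if_neg (by omega), add_zero]
      have split : ∀ j ∈ Finset.range n,
          (if 2 * j + 2 ≤ n + 1 then aaA j else 0)
            = (if 2 * j + 2 ≤ n then aaA j else 0)
              + (if 2 * j + 2 = n + 1 then aaA j else 0) := by
        intro j _
        by_cases h1 : 2 * j + 2 ≤ n
        · rw [if_pos h1, if_pos (by omega), if_neg (by omega), add_zero]
        · by_cases h2 : 2 * j + 2 = n + 1
          · rw [if_pos (by omega), if_neg h1, if_pos h2, zero_add]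
          · rw [if_neg (by omega), if_neg h1, if_neg h2, add_zero]
      rw [Finset.sum_congr rfl split, Finset.sum_add_distrib]
      congr 1
      rcases Nat.even_or_odd n with he | ho
      · have hAA : AA (n + 1) = 0 := by
          rw [AA, if_neg]
          obtain ⟨k, hk⟩ := he
          omega
        rw [hAA]
        rw [Finset.sum_eq_zero]
        intro j hj
        rw [if_neg]
        obtain ⟨k, hk⟩ := he
        omega
      · obtain ⟨k, hk⟩ := ho
        have h1 : n + 1 = 2 * k + 2 := by omega
        have hAA : AA (n + 1) = aaA k := by rw [h1, AA_two_add]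
        rw [hAA]
        have : ∀ j ∈ Finset.range n,
            (if 2 * j + 2 = n + 1 then aaA j else 0) = if j = k then aaA j else 0 := by
          intro j _
          congr 1
          · simp only [eq_iff_iff]; omega
        rw [Finset.sum_congr rfl this, Finset.sum_ite_eq' (Finset.range n) k,
          if_pos (Finset.mem_range.2 (by omega))]

lemma hasSum_main {x : ℝ} (hx : |x| < 1) :
    HasSum (fun n : ℕ =>
      (∑ j ∈ Finset.range n, if 2 * j + 2 ≤ n then aaA j else 0) * x ^ n)
      (Real.arcsin x ^ 2 / (2 * (1 - x))) := by
  have hxne : (1 : ℝ) - x ≠ 0 := by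
    obtain ⟨h1, h2⟩ := abs_lt.1 hx; intro h; linarith
  -- summability of the two factors in norm
  have hfnorm : Summable (fun n : ℕ => ‖AA n * x ^ n‖) := by
    refine Summable.of_nonneg_of_le (fun n => norm_nonneg _) (fun n => ?_)
      (summable_geometric_of_lt_one (abs_nonneg x) hx)
    rw [norm_mul, norm_pow, Real.norm_eq_abs, Real.norm_eq_abs]
    calc |AA n| * |x| ^ n ≤ 1 * |x| ^ n :=
          mul_le_mul_of_nonneg_right (AA_abs_le_one n) (by positivity)
      _ = |x| ^ n := one_mul _
  have hgnorm : Summable (fun n : ℕ => ‖x ^ n‖) := by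
    refine Summable.congr (summable_geometric_of_lt_one (abs_nonneg x) hx) fun n => ?_
    rw [Real.norm_eq_abs, abs_pow]
  have hcauchy := hasSum_sum_range_mul_of_summable_norm hfnorm hgnorm
  -- identify the two tsums
  have hfsum : HasSum (fun n : ℕ => AA n * x ^ n) (Real.arcsin x ^ 2 / 2) := by
    have hinj : Function.Injective (fun j : ℕ => 2 * j + 2) := by
      intro a b h
      simp only at h
      omega
    have hzero : ∀ n, n ∉ Set.range (fun j : ℕ => 2 * j + 2) → AA n * x ^ n = 0 := by
      intro n hn
      rw [AA, if_neg, zero_mul]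
      intro h
      exact hn ⟨(n - 2) / 2, show 2 * ((n - 2) / 2) + 2 = n by omega⟩
    rw [← Function.Injective.hasSum_iff hinj hzero]
    have hsumm : Summable (fun j : ℕ => aaA j * x ^ (2 * j + 2)) :=
      summable_coeff (fun j => by
        rw [abs_of_pos (aaA_pos j)]
        nlinarith [aaA_le_one j, Nat.cast_nonneg (α := ℝ) j]) hx 2
    have hhs := hsumm.hasSum
    rw [G_eq hx] at hhs
    have hfuneq : ((fun n : ℕ => AA n * x ^ n) ∘ (fun j : ℕ => 2 * j + 2))
        = fun j : ℕ => aaA j * x ^ (2 * j + 2) := by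
      funext j
      simp only [Function.comp_apply]
      rw [AA_two_add]
    rw [hfuneq]
    exact hhs
  have hgsum : HasSum (fun n : ℕ => x ^ n) (1 - x)⁻¹ :=
    hasSum_geometric_of_abs_lt_one hx
  rw [hfsum.tsum_eq, hgsum.tsum_eq] at hcauchy
  have hval : Real.arcsin x ^ 2 / 2 * (1 - x)⁻¹ = Real.arcsin x ^ 2 / (2 * (1 - x)) := by
    field_simp
  rw [hval] at hcauchy
  have hterm : (fun n : ℕ => ∑ k ∈ Finset.range (n + 1), (AA k * x ^ k) * x ^ (n - k))
      = fun n : ℕ =>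
        (∑ j ∈ Finset.range n, if 2 * j + 2 ≤ n then aaA j else 0) * x ^ n := by
    funext n
    rw [← sumAA n, Finset.sum_mul]
    refine Finset.sum_congr rfl fun k hk => ?_
    have hk' : k ≤ n := Nat.lt_succ_iff.1 (Finset.mem_range.1 hk)
    rw [mul_assoc, ← pow_add, Nat.add_sub_cancel' hk']
  rwa [hterm] at hcauchy
theorem arcsin_sq_egf_A372324 :
    (∀ x : ℝ, |x| < 1 →
      HasSum (fun n : ℕ =>
        (∑ j ∈ Finset.range n, if 2 * j + 2 ≤ n then
            (Nat.doubleFactorial (2 * j) : ℝ) ^ 2 / (Nat.factorial (2 * j + 2) : ℝ)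
          else 0) * x ^ n)
        (Real.arcsin x ^ 2 / (2 * (1 - x)))) ∧
    (∀ n : ℕ, Even n → 2 ≤ n →
      (n.factorial : ℝ) *
          (∑ j ∈ Finset.range n, if 2 * j + 2 ≤ n then
              (Nat.doubleFactorial (2 * j) : ℝ) ^ 2 / (Nat.factorial (2 * j + 2) : ℝ)
            else 0) =
        (n.factorial : ℝ) *
          ∑ j ∈ Finset.range ((n - 2) / 2 + 1),
            (Nat.doubleFactorial (2 * j) : ℝ) / (Nat.doubleFactorial (2 * j + 1) : ℝ) *
              (1 / (2 * (j : ℝ) + 2))) := by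
  constructor
  · intro x hx
    exact hasSum_main hx
  · intro n hev h2n
    obtain ⟨k, hk⟩ := hev
    have hm : (n - 2) / 2 + 1 ≤ n := by omega
    congr 1
    refine Eq.trans (b := ∑ j ∈ Finset.range ((n - 2) / 2 + 1), aaA j) ?_ ?_
    · have e := Finset.sum_subset (f := fun j : ℕ => if 2 * j + 2 ≤ n then aaA j else 0)
        (Finset.range_subset_range.2 hm)
        (fun j hj hnj => by
          simp only [Finset.mem_range] at hj hnj
          exact if_neg (by omega))
      rw [show (∑ j ∈ Finset.range n, if 2 * j + 2 ≤ n then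
            (Nat.doubleFactorial (2 * j) : ℝ) ^ 2 / (Nat.factorial (2 * j + 2) : ℝ)
          else 0) = ∑ j ∈ Finset.range n,
            (fun j : ℕ => if 2 * j + 2 ≤ n then aaA j else 0) j from rfl, ← e]
      refine Finset.sum_congr rfl fun j hj => ?_
      simp only [Finset.mem_range] at hj
      exact if_pos (by omega)
    · exact Finset.sum_congr rfl fun j _ => aaA_eq j
end

section
/- Let q be an odd positive integer. Then, as m tends to infinity over the positive integers (so that k = 2m+1 runs over the odd integers), the sums Σ_{ℓ=1}^{m} ∫_{ℓ·2π/(2m+2)}^{ℓ·2π/(2m)} (cos(q(2m+1)x) − cos(qx)) dx converge to 4/(q²·π). -/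
open Real Filter MeasureTheory Topology

/-- The half-angle `π q / (2 m)`. -/
noncomputable def vv (q m : ℕ) : ℝ := π * q / (2 * m)

lemma int_cos (c a b : ℝ) (hc : c ≠ 0) :
    ∫ x in a..b, Real.cos (c * x) = (Real.sin (c * b) - Real.sin (c * a)) / c := by
  have d : ∀ x : ℝ, HasDerivAt (fun y => Real.sin (c * y) / c) (Real.cos (c * x)) x := by
    intro x
    have h1 : HasDerivAt (fun y : ℝ => c * y) c x := by
      simpa using (hasDerivAt_id x).const_mul c
    have h3 := ((Real.hasDerivAt_sin (c * x)).comp x h1).div_const c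
    simpa [mul_div_assoc, div_self hc] using h3
  rw [intervalIntegral.integral_eq_sub_of_hasDerivAt (fun x _ => d x)
    ((Real.continuous_cos.comp (continuous_const.mul continuous_id)).intervalIntegrable a b)]
  ring

lemma sum_sin_eq (θ : ℝ) (m : ℕ) :
    2 * Real.sin (θ / 2) * ∑ ℓ ∈ Finset.Icc 1 m, Real.sin ((ℓ : ℝ) * θ)
      = Real.cos (θ / 2) - Real.cos ((m : ℝ) * θ + θ / 2) := by
  induction m with
  | zero => simp
  | succ n ih =>
    rw [Finset.sum_Icc_succ_top (by omega : 1 ≤ n + 1)]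
    have hc : Real.cos ((n : ℝ) * θ + θ / 2) - Real.cos (((n : ℝ) + 1) * θ + θ / 2)
        = 2 * Real.sin (θ / 2) * Real.sin (((n : ℝ) + 1) * θ) := by
      rw [Real.cos_sub_cos]
      have e1 : ((n : ℝ) * θ + θ / 2 + (((n : ℝ) + 1) * θ + θ / 2)) / 2 = ((n : ℝ) + 1) * θ := by
        ring
      have e2 : ((n : ℝ) * θ + θ / 2 - (((n : ℝ) + 1) * θ + θ / 2)) / 2 = -(θ / 2) := by
        ring
      rw [e1, e2, Real.sin_neg]
      ring
    push_cast
    push_cast at ih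
    linarith [ih, hc]

lemma vv_pos (q m : ℕ) (hq : 0 < q) (hm : 1 ≤ m) : 0 < vv q m := by
  have hm' : (0 : ℝ) < m := by exact_mod_cast hm
  have hq' : (0 : ℝ) < q := by exact_mod_cast hq
  exact div_pos (by positivity) (by positivity)

lemma sin_vv_pos (q m : ℕ) (hq : 0 < q) (h2 : q < 2 * m) : 0 < Real.sin (vv q m) := by
  have hm : 1 ≤ m := by omega
  have hm' : (0 : ℝ) < m := by exact_mod_cast hm
  have hq2 : (q : ℝ) < 2 * m := by exact_mod_cast h2
  apply Real.sin_pos_of_pos_of_lt_pi (vv_pos q m hq hm)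
  rw [vv, div_lt_iff₀ (by positivity)]
  nlinarith [Real.pi_pos]

lemma cos_odd_pi_add (q : ℕ) (hq : Odd q) (x : ℝ) :
    Real.cos ((q : ℝ) * π + x) = -Real.cos x := by
  rw [show (q : ℝ) * π + x = (q : ℝ) * π - (-x) by ring, Real.cos_nat_mul_pi_sub,
    Real.cos_neg, hq.neg_one_pow]
  ring

lemma cos_odd_pi_sub (q : ℕ) (hq : Odd q) (x : ℝ) :
    Real.cos ((q : ℝ) * π - x) = -Real.cos x := by
  rw [Real.cos_nat_mul_pi_sub, hq.neg_one_pow]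
  ring

lemma sumB (q m : ℕ) (hq : Odd q) (hpos : 0 < q) (h2 : q < 2 * m) :
    ∑ ℓ ∈ Finset.Icc 1 m, Real.sin ((ℓ : ℝ) * (2 * vv q m))
      = Real.cos (vv q m) / Real.sin (vv q m) := by
  have hm : 1 ≤ m := by omega
  have hm' : (m : ℝ) ≠ 0 := by
    have : (0 : ℝ) < m := by exact_mod_cast hm
    exact this.ne'
  have hs := sum_sin_eq (2 * vv q m) m
  have hhalf : (2 * vv q m) / 2 = vv q m := by ring
  have harg : (m : ℝ) * (2 * vv q m) + vv q m = (q : ℝ) * π + vv q m := by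
    simp only [vv]
    field_simp
  rw [hhalf, harg, cos_odd_pi_add q hq] at hs
  have hsin : Real.sin (vv q m) ≠ 0 := (sin_vv_pos q m hpos h2).ne'
  field_simp at hs ⊢
  simp only [mul_comm, mul_left_comm, mul_assoc] at hs ⊢
  linarith

lemma sumA (q m : ℕ) (hq : Odd q) (hpos : 0 < q) (h2 : q < 2 * (m + 1)) :
    ∑ ℓ ∈ Finset.Icc 1 m, Real.sin ((ℓ : ℝ) * (2 * vv q (m + 1)))
      = Real.cos (vv q (m + 1)) / Real.sin (vv q (m + 1)) := by
  have hm' : ((m : ℝ) + 1) ≠ 0 := by positivity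
  have hs := sum_sin_eq (2 * vv q (m + 1)) m
  have hhalf : (2 * vv q (m + 1)) / 2 = vv q (m + 1) := by ring
  have harg : (m : ℝ) * (2 * vv q (m + 1)) + vv q (m + 1)
      = (q : ℝ) * π - vv q (m + 1) := by
    simp only [vv]
    push_cast
    field_simp
    ring
  rw [hhalf, harg, cos_odd_pi_sub q hq] at hs
  have hsin : Real.sin (vv q (m + 1)) ≠ 0 := (sin_vv_pos q (m + 1) hpos h2).ne'
  field_simp at hs ⊢
  simp only [mul_comm, mul_left_comm, mul_assoc] at hs ⊢
  linarith

lemma integral_step (q m ℓ : ℕ) (hq : 0 < q) (hm : 1 ≤ m) :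
    (∫ x in ((ℓ : ℝ) * 2 * π / (2 * (m : ℝ) + 2))..((ℓ : ℝ) * 2 * π / (2 * (m : ℝ))),
        (Real.cos ((q : ℝ) * (2 * (m : ℝ) + 1) * x) - Real.cos ((q : ℝ) * x)))
      = Real.sin ((ℓ : ℝ) * (2 * vv q m)) * (1 / ((q : ℝ) * (2 * (m : ℝ) + 1)) - 1 / (q : ℝ))
        + Real.sin ((ℓ : ℝ) * (2 * vv q (m + 1)))
            * (1 / ((q : ℝ) * (2 * (m : ℝ) + 1)) + 1 / (q : ℝ)) := by
  have hq' : (0 : ℝ) < q := by exact_mod_cast hq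
  have hm' : (0 : ℝ) < m := by exact_mod_cast hm
  have hC1 : ((q : ℝ) * (2 * (m : ℝ) + 1)) ≠ 0 := by positivity
  have hC2 : ((q : ℝ)) ≠ 0 := hq'.ne'
  have hd1 : (2 * (m : ℝ) + 2) ≠ 0 := by positivity
  have hd2 : (2 * (m : ℝ)) ≠ 0 := by positivity
  rw [intervalIntegral.integral_sub
      ((by fun_prop : Continuous fun x : ℝ =>
        Real.cos ((q : ℝ) * (2 * (m : ℝ) + 1) * x)).intervalIntegrable _ _)
      ((by fun_prop : Continuous fun x : ℝ => Real.cos ((q : ℝ) * x)).intervalIntegrable _ _),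
    int_cos _ _ _ hC1, int_cos _ _ _ hC2]
  have e1 : (q : ℝ) * (2 * (m : ℝ) + 1) * ((ℓ : ℝ) * 2 * π / (2 * (m : ℝ) + 2))
      = ((ℓ * q : ℕ) : ℝ) * (2 * π) - (ℓ : ℝ) * (2 * vv q (m + 1)) := by
    simp only [vv]
    push_cast
    field_simp
    ring
  have e2 : (q : ℝ) * (2 * (m : ℝ) + 1) * ((ℓ : ℝ) * 2 * π / (2 * (m : ℝ)))
      = (ℓ : ℝ) * (2 * vv q m) + ((ℓ * q : ℕ) : ℝ) * (2 * π) := by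
    simp only [vv]
    push_cast
    field_simp
    ring
  have e3 : (q : ℝ) * ((ℓ : ℝ) * 2 * π / (2 * (m : ℝ) + 2)) = (ℓ : ℝ) * (2 * vv q (m + 1)) := by
    simp only [vv]
    push_cast
    field_simp
  have e4 : (q : ℝ) * ((ℓ : ℝ) * 2 * π / (2 * (m : ℝ))) = (ℓ : ℝ) * (2 * vv q m) := by
    simp only [vv]
    field_simp
  rw [e1, e2, e3, e4, Real.sin_nat_mul_two_pi_sub, Real.sin_add_nat_mul_two_pi]
  field_simp
  ring

lemma tendsto_sin_div : Tendsto (fun x : ℝ => Real.sin x / x) (𝓝[≠] 0) (𝓝 1) := by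
  have h := Real.hasDerivAt_sin 0
  rw [Real.cos_zero] at h
  have h2 := hasDerivAt_iff_tendsto_slope.mp h
  apply h2.congr
  intro x
  simp [slope_def_field, Real.sin_zero, div_eq_mul_inv, mul_comm]

lemma cot_aux (u d : ℕ → ℝ) (L : ℝ) (hL : L ≠ 0)
    (hu : Tendsto u atTop (𝓝[≠] (0 : ℝ)))
    (hd : Tendsto (fun m => u m * d m) atTop (𝓝 L)) :
    Tendsto (fun m => Real.cos (u m) / Real.sin (u m) / d m) atTop (𝓝 (1 / L)) := by
  have hu0 : Tendsto u atTop (𝓝 0) := hu.mono_right nhdsWithin_le_nhds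
  have hs : Tendsto (fun m => Real.sin (u m) / u m) atTop (𝓝 1) := tendsto_sin_div.comp hu
  have hcos : Tendsto (fun m => Real.cos (u m)) atTop (𝓝 1) := by
    have := (Real.continuous_cos.tendsto 0).comp hu0
    simpa [Function.comp_def] using this
  have hne : ∀ᶠ m in atTop, u m ≠ 0 := hu (self_mem_nhdsWithin)
  have hsne : ∀ᶠ m in atTop, Real.sin (u m) / u m ≠ 0 := hs.eventually_ne one_ne_zero
  have hudne : ∀ᶠ m in atTop, u m * d m ≠ 0 := hd.eventually_ne hL
  have key : Tendsto (fun m => Real.cos (u m) * (Real.sin (u m) / u m)⁻¹ * (u m * d m)⁻¹)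
      atTop (𝓝 (1 * (1 : ℝ)⁻¹ * L⁻¹)) :=
    (hcos.mul (hs.inv₀ one_ne_zero)).mul (hd.inv₀ hL)
  have hval : (1 : ℝ) * (1 : ℝ)⁻¹ * L⁻¹ = 1 / L := by norm_num
  rw [hval] at key
  apply key.congr'
  filter_upwards [hne, hsne, hudne] with m h1 h2 h3
  have hd0 : d m ≠ 0 := by
    intro h
    exact h3 (by simp [h])
  have hsin : Real.sin (u m) ≠ 0 := by
    intro h
    exact h2 (by simp [h])
  field_simp

lemma cot_diff_eq (v w c K : ℝ) (hv : Real.sin v ≠ 0) (hw : Real.sin w ≠ 0)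
    (hv0 : v ≠ 0) (hw0 : w ≠ 0) (hc : c ≠ 0) (hK0 : K ≠ 0)
    (hK : v * w * K * c = v - w) :
    (Real.cos w / Real.sin w - Real.cos v / Real.sin v) / c
      = (Real.sin (v - w) / (v - w)) * (Real.sin v / v)⁻¹ * (Real.sin w / w)⁻¹ * K := by
  rw [Real.sin_sub, ← hK]
  field_simp

theorem trig_integral_odd_odd (q : ℕ) (hq : Odd q) (hpos : 0 < q) :
    Tendsto (fun m : ℕ =>
      ∑ ℓ ∈ Finset.Icc 1 m,
        ∫ x in ((ℓ : ℝ) * 2 * π / (2 * (m : ℝ) + 2))..((ℓ : ℝ) * 2 * π / (2 * (m : ℝ))),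
          (Real.cos ((q : ℝ) * (2 * (m : ℝ) + 1) * x) - Real.cos ((q : ℝ) * x)))
      atTop (𝓝 (4 / ((q : ℝ) ^ 2 * π))) := by
  have hπ := Real.pi_pos
  have hq' : (0 : ℝ) < q := by exact_mod_cast hpos
  have hq0 : (q : ℝ) ≠ 0 := hq'.ne'
  have hπq2 : π * (q : ℝ) ^ 2 ≠ 0 := by positivity
  have hinv : Tendsto (fun n : ℕ => ((n : ℝ))⁻¹) atTop (𝓝 0) :=
    tendsto_inv_atTop_zero.comp tendsto_natCast_atTop_atTop
  have hinv1 : Tendsto (fun n : ℕ => ((n : ℝ) + 1)⁻¹) atTop (𝓝 0) := by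
    have h := hinv.comp (tendsto_add_atTop_nat 1)
    apply h.congr
    intro n
    simp only [Function.comp]
    push_cast
    rfl
  have hvv0 : Tendsto (fun m : ℕ => vv q m) atTop (𝓝 0) := by
    have h1 : Tendsto (fun m : ℕ => (π * (q : ℝ) / 2) * (m : ℝ)⁻¹) atTop
        (𝓝 ((π * (q : ℝ) / 2) * 0)) := hinv.const_mul _
    rw [mul_zero] at h1
    apply h1.congr
    intro m
    simp only [vv]
    ring
  have hv : Tendsto (fun m : ℕ => vv q m) atTop (𝓝[≠] 0) := by
    rw [tendsto_nhdsWithin_iff]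
    refine ⟨hvv0, ?_⟩
    filter_upwards [eventually_ge_atTop 1] with m hm
    simpa using (vv_pos q m hpos hm).ne'
  have hw : Tendsto (fun m : ℕ => vv q (m + 1)) atTop (𝓝[≠] 0) :=
    hv.comp (tendsto_add_atTop_nat 1)
  have hw0 : Tendsto (fun m : ℕ => vv q (m + 1)) atTop (𝓝 0) :=
    hw.mono_right nhdsWithin_le_nhds
  have hd1 : Tendsto (fun m : ℕ => vv q m * ((q : ℝ) * (2 * (m : ℝ) + 1))) atTop
      (𝓝 (π * (q : ℝ) ^ 2)) := by
    have h1 : Tendsto (fun m : ℕ => π * (q : ℝ) ^ 2 + (π * (q : ℝ) ^ 2 / 2) * (m : ℝ)⁻¹) atTop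
        (𝓝 (π * (q : ℝ) ^ 2 + (π * (q : ℝ) ^ 2 / 2) * 0)) := tendsto_const_nhds.add (hinv.const_mul _)
    rw [mul_zero, add_zero] at h1
    apply h1.congr'
    filter_upwards [eventually_ge_atTop 1] with m hm
    have hm' : (m : ℝ) ≠ 0 := by
      have : (0 : ℝ) < m := by exact_mod_cast hm
      exact this.ne'
    simp only [vv]
    field_simp
  have hG1 := cot_aux (fun m : ℕ => vv q m) (fun m : ℕ => (q : ℝ) * (2 * (m : ℝ) + 1))
    (π * (q : ℝ) ^ 2) hπq2 hv hd1
  have hd2 : Tendsto (fun m : ℕ => vv q (m + 1) * ((q : ℝ) * (2 * (m : ℝ) + 1))) atTop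
      (𝓝 (π * (q : ℝ) ^ 2)) := by
    have h1 : Tendsto (fun m : ℕ => π * (q : ℝ) ^ 2 - (π * (q : ℝ) ^ 2 / 2) * ((m : ℝ) + 1)⁻¹) atTop
        (𝓝 (π * (q : ℝ) ^ 2 - (π * (q : ℝ) ^ 2 / 2) * 0)) := tendsto_const_nhds.sub (hinv1.const_mul _)
    rw [mul_zero, sub_zero] at h1
    apply h1.congr
    intro m
    have hm1 : ((m : ℝ) + 1) ≠ 0 := by positivity
    simp only [vv]
    push_cast
    field_simp
    ring
  have hG2 := cot_aux (fun m : ℕ => vv q (m + 1)) (fun m : ℕ => (q : ℝ) * (2 * (m : ℝ) + 1))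
    (π * (q : ℝ) ^ 2) hπq2 hw hd2
  have hu : Tendsto (fun m : ℕ => vv q m - vv q (m + 1)) atTop (𝓝[≠] 0) := by
    rw [tendsto_nhdsWithin_iff]
    constructor
    · simpa using hvv0.sub hw0
    · filter_upwards [eventually_ge_atTop 1] with m hm
      have hm' : (0 : ℝ) < m := by exact_mod_cast hm
      have hlt : vv q (m + 1) < vv q m := by
        simp only [vv]
        push_cast
        exact div_lt_div_of_pos_left (by positivity) (by positivity) (by linarith)
      simpa using (sub_pos.mpr hlt).ne'
  have hsu : Tendsto (fun m : ℕ => Real.sin (vv q m - vv q (m + 1)) / (vv q m - vv q (m + 1)))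
      atTop (𝓝 1) := tendsto_sin_div.comp hu
  have hsv : Tendsto (fun m : ℕ => Real.sin (vv q m) / vv q m) atTop (𝓝 1) :=
    tendsto_sin_div.comp hv
  have hsw : Tendsto (fun m : ℕ => Real.sin (vv q (m + 1)) / vv q (m + 1)) atTop (𝓝 1) :=
    tendsto_sin_div.comp hw
  have hG3 : Tendsto (fun m : ℕ =>
      (Real.cos (vv q (m + 1)) / Real.sin (vv q (m + 1))
        - Real.cos (vv q m) / Real.sin (vv q m)) / (q : ℝ)) atTop
      (𝓝 (2 / (π * (q : ℝ) ^ 2))) := by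
    have hP : Tendsto (fun m : ℕ =>
        (Real.sin (vv q m - vv q (m + 1)) / (vv q m - vv q (m + 1)))
          * (Real.sin (vv q m) / vv q m)⁻¹ * (Real.sin (vv q (m + 1)) / vv q (m + 1))⁻¹
          * (2 / (π * (q : ℝ) ^ 2))) atTop
        (𝓝 (1 * (1 : ℝ)⁻¹ * (1 : ℝ)⁻¹ * (2 / (π * (q : ℝ) ^ 2)))) :=
      ((hsu.mul (hsv.inv₀ one_ne_zero)).mul (hsw.inv₀ one_ne_zero)).mul_const _
    have hval : (1 : ℝ) * (1 : ℝ)⁻¹ * (1 : ℝ)⁻¹ * (2 / (π * (q : ℝ) ^ 2))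
        = 2 / (π * (q : ℝ) ^ 2) := by norm_num
    rw [hval] at hP
    apply hP.congr'
    filter_upwards [eventually_ge_atTop q] with m hm
    have hm1 : 1 ≤ m := le_trans hpos hm
    have h2m : q < 2 * m := by omega
    have h2m1 : q < 2 * (m + 1) := by omega
    have hm' : (m : ℝ) ≠ 0 := by
      have : (0 : ℝ) < m := by exact_mod_cast hm1
      exact this.ne'
    have hsv0 : Real.sin (vv q m) ≠ 0 := (sin_vv_pos q m hpos h2m).ne'
    have hsw0 : Real.sin (vv q (m + 1)) ≠ 0 := (sin_vv_pos q (m + 1) hpos h2m1).ne'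
    have hv0 : vv q m ≠ 0 := (vv_pos q m hpos hm1).ne'
    have hw0' : vv q (m + 1) ≠ 0 := (vv_pos q (m + 1) hpos (by omega)).ne'
    have hK0 : (2 / (π * (q : ℝ) ^ 2)) ≠ 0 := by positivity
    have hK : vv q m * vv q (m + 1) * (2 / (π * (q : ℝ) ^ 2)) * (q : ℝ)
        = vv q m - vv q (m + 1) := by
      simp only [vv]
      push_cast
      field_simp
      ring
    exact (cot_diff_eq _ _ _ _ hsv0 hsw0 hv0 hw0' hq0 hK0 hK).symm
  have hFt : Tendsto (fun m : ℕ =>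
      Real.cos (vv q m) / Real.sin (vv q m) / ((q : ℝ) * (2 * (m : ℝ) + 1))
        + Real.cos (vv q (m + 1)) / Real.sin (vv q (m + 1)) / ((q : ℝ) * (2 * (m : ℝ) + 1))
        + (Real.cos (vv q (m + 1)) / Real.sin (vv q (m + 1))
            - Real.cos (vv q m) / Real.sin (vv q m)) / (q : ℝ)) atTop
      (𝓝 (1 / (π * (q : ℝ) ^ 2) + 1 / (π * (q : ℝ) ^ 2) + 2 / (π * (q : ℝ) ^ 2))) :=
    (hG1.add hG2).add hG3
  have hval : 1 / (π * (q : ℝ) ^ 2) + 1 / (π * (q : ℝ) ^ 2) + 2 / (π * (q : ℝ) ^ 2)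
      = 4 / ((q : ℝ) ^ 2 * π) := by
    field_simp
    ring
  rw [hval] at hFt
  apply hFt.congr'
  filter_upwards [eventually_ge_atTop q] with m hm
  have hm1 : 1 ≤ m := le_trans hpos hm
  have h2m : q < 2 * m := by omega
  have h2m1 : q < 2 * (m + 1) := by omega
  symm
  calc ∑ ℓ ∈ Finset.Icc 1 m,
        ∫ x in ((ℓ : ℝ) * 2 * π / (2 * (m : ℝ) + 2))..((ℓ : ℝ) * 2 * π / (2 * (m : ℝ))),
          (Real.cos ((q : ℝ) * (2 * (m : ℝ) + 1) * x) - Real.cos ((q : ℝ) * x))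
      = ∑ ℓ ∈ Finset.Icc 1 m,
          (Real.sin ((ℓ : ℝ) * (2 * vv q m)) * (1 / ((q : ℝ) * (2 * (m : ℝ) + 1)) - 1 / (q : ℝ))
            + Real.sin ((ℓ : ℝ) * (2 * vv q (m + 1)))
                * (1 / ((q : ℝ) * (2 * (m : ℝ) + 1)) + 1 / (q : ℝ))) :=
        Finset.sum_congr rfl fun ℓ _ => integral_step q m ℓ hpos hm1
    _ = (∑ ℓ ∈ Finset.Icc 1 m, Real.sin ((ℓ : ℝ) * (2 * vv q m)))
            * (1 / ((q : ℝ) * (2 * (m : ℝ) + 1)) - 1 / (q : ℝ))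
          + (∑ ℓ ∈ Finset.Icc 1 m, Real.sin ((ℓ : ℝ) * (2 * vv q (m + 1))))
            * (1 / ((q : ℝ) * (2 * (m : ℝ) + 1)) + 1 / (q : ℝ)) := by
        rw [Finset.sum_add_distrib, ← Finset.sum_mul, ← Finset.sum_mul]
    _ = Real.cos (vv q m) / Real.sin (vv q m)
            * (1 / ((q : ℝ) * (2 * (m : ℝ) + 1)) - 1 / (q : ℝ))
          + Real.cos (vv q (m + 1)) / Real.sin (vv q (m + 1))
            * (1 / ((q : ℝ) * (2 * (m : ℝ) + 1)) + 1 / (q : ℝ)) := by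
        rw [sumB q m hq hpos h2m, sumA q m hq hpos h2m1]
    _ = Real.cos (vv q m) / Real.sin (vv q m) / ((q : ℝ) * (2 * (m : ℝ) + 1))
          + Real.cos (vv q (m + 1)) / Real.sin (vv q (m + 1)) / ((q : ℝ) * (2 * (m : ℝ) + 1))
          + (Real.cos (vv q (m + 1)) / Real.sin (vv q (m + 1))
              - Real.cos (vv q m) / Real.sin (vv q m)) / (q : ℝ) := by
        ring
end

section
/- Let q be an even positive integer, and for odd k = 2m+1 set f_{q,k}(x) = cos(qx) − cos(qkx) and S(k) = Σ_{ℓ=1}^{(k−1)/2} ( ∫_{(ℓ−1)π/(k−1)}^{ℓπ/(k+1)} f_{q,k}(x) dx − ∫_{ℓπ/(k+1)}^{ℓπ/(k−1)} f_{q,k}(x) dx ). Then, as m → ∞ over the positive integers, S(2m+1) converges to 0 if q ≡ 0 (mod 4), and to 16/(q²·π) if q ≡ 2 (mod 4). -/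
open Real Filter MeasureTheory Topology

lemma cosIntEval (A u v : ℝ) (hA : A ≠ 0) :
    ∫ x in u..v, Real.cos (A * x) = (Real.sin (A * v) - Real.sin (A * u)) / A := by
  rw [intervalIntegral.integral_comp_mul_left (fun x => Real.cos x) hA, integral_cos, smul_eq_mul]
  field_simp

lemma fIntEval (A B u v : ℝ) (hA : A ≠ 0) (hB : B ≠ 0) :
    (∫ x in u..v, (Real.cos (A * x) - Real.cos (B * x)))
      = ((Real.sin (A * v) - Real.sin (A * u)) / A) - ((Real.sin (B * v) - Real.sin (B * u)) / B) := by
  rw [intervalIntegral.integral_sub ((Continuous.intervalIntegrable (by continuity) u v))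
      ((Continuous.intervalIntegrable (by continuity) u v)), cosIntEval A u v hA, cosIntEval B u v hB]

lemma sinSumTel (θ : ℝ) (n : ℕ) :
    Real.sin (θ/2) * ∑ ℓ ∈ Finset.Icc 1 n, Real.sin (ℓ * θ)
      = (Real.cos (θ/2) - Real.cos (((n : ℝ) + 1/2) * θ)) / 2 := by
  induction n with
  | zero =>
    rw [show Finset.Icc 1 0 = ∅ from rfl, Finset.sum_empty, mul_zero,
      show ((0:ℕ):ℝ) + 1/2 = 1/2 by norm_num, show ((1:ℝ)/2)*θ = θ/2 by ring]
    ring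
  | succ n ih =>
    rw [Finset.sum_Icc_succ_top (by omega), mul_add, ih]
    have key : Real.cos (((n:ℝ) + 1/2) * θ) - Real.cos ((((n:ℝ)+1) + 1/2) * θ)
        = 2 * Real.sin (θ/2) * Real.sin (((n:ℝ)+1) * θ) := by
      rw [Real.cos_sub_cos]
      have h1 : (((n:ℝ)+1/2)*θ + (((n:ℝ)+1)+1/2)*θ)/2 = ((n:ℝ)+1)*θ := by ring
      have h2 : (((n:ℝ)+1/2)*θ - (((n:ℝ)+1)+1/2)*θ)/2 = -(θ/2) := by ring
      rw [h1, h2, Real.sin_neg]; ring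
    push_cast
    linarith [key]

lemma sinZeroAll {θ : ℝ} (h : Real.sin (θ/2) = 0) (x : ℝ) (hx : ∃ j : ℤ, x = j) :
    Real.sin (x * θ) = 0 := by
  obtain ⟨j, rfl⟩ := hx
  obtain ⟨i, hi⟩ := Real.sin_eq_zero_iff.mp h
  have hθ2 : θ = (i:ℝ) * π * 2 := by linarith
  have : (j:ℝ) * θ = ((j*i*2 : ℤ):ℝ) * π := by push_cast; rw [hθ2]; ring
  rw [this, Real.sin_int_mul_pi]

lemma sinSumEven (p n : ℕ) (hp : Even p) (hn : 1 ≤ n) :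
    ∑ ℓ ∈ Finset.Icc 1 n, Real.sin ((ℓ:ℝ) * ((p:ℝ) * π / n)) = 0 := by
  set θ : ℝ := (p:ℝ) * π / n with hθ
  by_cases hs : Real.sin (θ/2) = 0
  · exact Finset.sum_eq_zero fun ℓ _ => sinZeroAll hs _ ⟨ℓ, by push_cast; ring⟩
  · have hn' : (n:ℝ) ≠ 0 := Nat.cast_ne_zero.mpr (by omega)
    obtain ⟨r, hr⟩ := hp
    have harg : ((n:ℝ) + 1/2) * θ = θ/2 + (r:ℕ) * (2*π) := by
      rw [hθ]; field_simp; push_cast [hr]; ring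
    have h2 := sinSumTel θ n
    rw [harg, Real.cos_add_nat_mul_two_pi, sub_self, zero_div] at h2
    exact (mul_eq_zero.mp h2).resolve_left hs

lemma sinSumOdd (p n : ℕ) (hp : Odd p) (hn : 1 ≤ n) :
    ∑ ℓ ∈ Finset.Icc 1 n, Real.sin ((ℓ:ℝ) * ((p:ℝ) * π / n))
      = Real.cos ((p:ℝ) * π / (2*n)) / Real.sin ((p:ℝ) * π / (2*n)) := by
  set θ : ℝ := (p:ℝ) * π / n with hθ
  have hn' : (n:ℝ) ≠ 0 := Nat.cast_ne_zero.mpr (by omega)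
  have hhalf : θ/2 = (p:ℝ) * π / (2*n) := by rw [hθ]; ring
  have hs : Real.sin (θ/2) ≠ 0 := by
    rw [hhalf]
    intro h
    obtain ⟨i, hi⟩ := Real.sin_eq_zero_iff.mp h
    have hπ : (0:ℝ) < π := Real.pi_pos
    have : (i * (2*n) : ℝ) = p := by field_simp at hi; nlinarith [hi]
    have h3 : (i * (2*n) : ℤ) = p := by exact_mod_cast this
    have : (2:ℤ) ∣ (p:ℤ) := ⟨i * n, by rw [← h3]; ring⟩
    have : (2:ℕ) ∣ p := by exact_mod_cast this
    exact (Nat.not_even_iff_odd.mpr hp) (even_iff_two_dvd.mpr this)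
  obtain ⟨r, hr⟩ := hp
  have harg : ((n:ℝ) + 1/2) * θ = (θ/2 + π) + (r:ℕ) * (2*π) := by
    rw [hθ]; field_simp; push_cast [hr]; ring
  have h2 := sinSumTel θ n
  rw [harg, Real.cos_add_nat_mul_two_pi, Real.cos_add_pi, sub_neg_eq_add] at h2
  rw [← hhalf]
  field_simp at h2 ⊢
  linarith [h2]

lemma sumShiftSin (m : ℕ) (c : ℝ) (hc : Real.sin ((m:ℝ) * c) = 0) :
    ∑ ℓ ∈ Finset.Icc 1 m, Real.sin (((ℓ:ℝ) - 1) * c)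
      = ∑ ℓ ∈ Finset.Icc 1 m, Real.sin ((ℓ:ℝ) * c) := by
  rw [← Finset.Ico_add_one_right_eq_Icc, Finset.sum_Ico_eq_sum_range, Finset.sum_Ico_eq_sum_range]
  simp only [Nat.succ_sub_one, Nat.add_sub_cancel]
  have hL : ∀ i : ℕ, Real.sin ((((1+i:ℕ):ℝ) - 1) * c) = Real.sin ((i:ℝ) * c) := by
    intro i; push_cast; ring_nf
  simp only [hL]
  have h1 : ∑ i ∈ Finset.range (m+1), Real.sin ((i:ℝ)*c)
      = ∑ i ∈ Finset.range m, Real.sin (((i+1:ℕ):ℝ)*c) + Real.sin (((0:ℕ):ℝ)*c) :=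
    Finset.sum_range_succ' (fun i => Real.sin ((i:ℝ)*c)) m
  have h2 : ∑ i ∈ Finset.range (m+1), Real.sin ((i:ℝ)*c)
      = ∑ i ∈ Finset.range m, Real.sin ((i:ℝ)*c) + Real.sin ((m:ℝ)*c) :=
    Finset.sum_range_succ (fun i => Real.sin ((i:ℝ)*c)) m
  have h3 : ∀ i : ℕ, Real.sin (((1+i:ℕ):ℝ) * c) = Real.sin (((i+1:ℕ):ℝ)*c) := by
    intro i; push_cast; ring_nf
  simp only [h3]
  rw [hc] at h2
  simp only [Nat.cast_zero, zero_mul, Real.sin_zero, add_zero] at h1 h2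
  linarith [h1, h2]

lemma sumEval (q p m : ℕ) (hqp : q = 2*p) (hp : 0 < p) (hm : 1 ≤ m) :
    ∑ ℓ ∈ Finset.Icc 1 m,
      ((∫ x in (((ℓ : ℝ) - 1) * π / (2 * (m : ℝ)))..((ℓ : ℝ) * π / (2 * (m : ℝ) + 2)),
          (Real.cos ((q : ℝ) * x) - Real.cos ((q : ℝ) * (2 * (m : ℝ) + 1) * x))) -
       (∫ x in ((ℓ : ℝ) * π / (2 * (m : ℝ) + 2))..((ℓ : ℝ) * π / (2 * (m : ℝ))),
          (Real.cos ((q : ℝ) * x) - Real.cos ((q : ℝ) * (2 * (m : ℝ) + 1) * x))))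
    = (4 / ((q:ℝ) * (2*(m:ℝ)+1))) *
      ( ((m:ℝ)+1) * (∑ ℓ ∈ Finset.Icc 1 m, Real.sin ((ℓ:ℝ) * ((p:ℝ)*π/((m:ℝ)+1))))
        - (m:ℝ) * (∑ ℓ ∈ Finset.Icc 1 m, Real.sin ((ℓ:ℝ) * ((p:ℝ)*π/(m:ℝ)))) ) := by
  have hM : (m:ℝ) ≠ 0 := Nat.cast_ne_zero.mpr (by omega)
  have hM1 : (m:ℝ) ≥ 1 := by exact_mod_cast hm
  have hq0 : (q:ℝ) ≠ 0 := by
    have : 0 < q := by omega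
    exact Nat.cast_ne_zero.mpr (by omega)
  have hk : (2*(m:ℝ)+1) ≠ 0 := by positivity
  have hB : (q:ℝ) * (2*(m:ℝ)+1) ≠ 0 := mul_ne_zero hq0 hk
  have hstep : ∀ ℓ ∈ Finset.Icc 1 m,
      ((∫ x in (((ℓ : ℝ) - 1) * π / (2 * (m : ℝ)))..((ℓ : ℝ) * π / (2 * (m : ℝ) + 2)),
          (Real.cos ((q : ℝ) * x) - Real.cos ((q : ℝ) * (2 * (m : ℝ) + 1) * x))) -
       (∫ x in ((ℓ : ℝ) * π / (2 * (m : ℝ) + 2))..((ℓ : ℝ) * π / (2 * (m : ℝ))),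
          (Real.cos ((q : ℝ) * x) - Real.cos ((q : ℝ) * (2 * (m : ℝ) + 1) * x))))
      = ((4*((m:ℝ)+1)) * Real.sin ((ℓ:ℝ) * ((p:ℝ)*π/((m:ℝ)+1)))
          - (2*(m:ℝ)) * Real.sin (((ℓ:ℝ)-1) * ((p:ℝ)*π/(m:ℝ)))
          - (2*(m:ℝ)) * Real.sin ((ℓ:ℝ) * ((p:ℝ)*π/(m:ℝ)))) / ((q:ℝ) * (2*(m:ℝ)+1)) := by
    intro ℓ hℓ
    obtain ⟨hℓ1, hℓm⟩ := Finset.mem_Icc.mp hℓ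
    set L : ℝ := (ℓ:ℝ) with hL
    set M : ℝ := (m:ℝ) with hMdef
    set A : ℝ := (q:ℝ) with hA
    set B : ℝ := (q:ℝ) * (2*M+1) with hBdef
    rw [fIntEval A B _ _ hq0 hB, fIntEval A B _ _ hq0 hB]
    -- sine values at the three points
    have e1 : B * ((L-1) * π / (2*M)) = A * ((L-1) * π / (2*M)) + ((p*(ℓ-1):ℕ):ℝ) * (2*π) := by
      push_cast [Nat.cast_sub hℓ1, hqp]
      rw [hBdef, hA, hqp]; push_cast; field_simp; ring
    have e2 : B * (L * π / (2*M)) = A * (L * π / (2*M)) + ((p*ℓ:ℕ):ℝ) * (2*π) := by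
      rw [hBdef, hA, hqp]; push_cast; field_simp; ring
    have e3 : B * (L * π / (2*M+2)) = -(A * (L * π / (2*M+2))) + ((p*ℓ:ℕ):ℝ) * (2*π) := by
      have h2M2 : (2*M+2) ≠ 0 := by positivity
      rw [hBdef, hA, hqp]; push_cast; field_simp; ring
    have s1 : Real.sin (B * ((L-1) * π / (2*M))) = Real.sin (A * ((L-1) * π / (2*M))) := by
      rw [e1, Real.sin_add_nat_mul_two_pi]
    have s2 : Real.sin (B * (L * π / (2*M))) = Real.sin (A * (L * π / (2*M))) := by
      rw [e2, Real.sin_add_nat_mul_two_pi]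
    have s3 : Real.sin (B * (L * π / (2*M+2))) = -Real.sin (A * (L * π / (2*M+2))) := by
      rw [e3, Real.sin_add_nat_mul_two_pi, Real.sin_neg]
    -- arguments of A-sines in standard form
    have a1 : A * ((L-1) * π / (2*M)) = (L-1) * ((p:ℝ)*π/M) := by
      rw [hA, hqp]; push_cast; field_simp
    have a2 : A * (L * π / (2*M)) = L * ((p:ℝ)*π/M) := by
      rw [hA, hqp]; push_cast; field_simp
    have a3 : A * (L * π / (2*M+2)) = L * ((p:ℝ)*π/(M+1)) := by
      have hM1' : (M+1) ≠ 0 := by positivity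
      rw [hA, hqp]; push_cast; field_simp
    rw [s1, s2, s3, a1, a2, a3]
    rw [hBdef, hA]
    field_simp
    ring
  rw [Finset.sum_congr rfl hstep]
  rw [← Finset.sum_div]
  have hsplit : ∑ ℓ ∈ Finset.Icc 1 m,
      ((4*((m:ℝ)+1)) * Real.sin ((ℓ:ℝ) * ((p:ℝ)*π/((m:ℝ)+1)))
          - (2*(m:ℝ)) * Real.sin (((ℓ:ℝ)-1) * ((p:ℝ)*π/(m:ℝ)))
          - (2*(m:ℝ)) * Real.sin ((ℓ:ℝ) * ((p:ℝ)*π/(m:ℝ))))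
      = (4*((m:ℝ)+1)) * (∑ ℓ ∈ Finset.Icc 1 m, Real.sin ((ℓ:ℝ) * ((p:ℝ)*π/((m:ℝ)+1))))
        - (2*(m:ℝ)) * (∑ ℓ ∈ Finset.Icc 1 m, Real.sin (((ℓ:ℝ)-1) * ((p:ℝ)*π/(m:ℝ))))
        - (2*(m:ℝ)) * (∑ ℓ ∈ Finset.Icc 1 m, Real.sin ((ℓ:ℝ) * ((p:ℝ)*π/(m:ℝ)))) := by
    simp [Finset.sum_sub_distrib, Finset.mul_sum]
  rw [hsplit, sumShiftSin m ((p:ℝ)*π/(m:ℝ)) (by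
      rw [show (m:ℝ) * ((p:ℝ)*π/(m:ℝ)) = (p:ℝ)*π by field_simp]
      exact Real.sin_nat_mul_pi p)]
  ring

lemma cotBound {t : ℝ} (ht : 0 < t) (ht1 : t ≤ 1) :
    |Real.cos t / Real.sin t - 1/t| ≤ t := by
  have ht2 : t^2 ≤ 1 := by nlinarith
  have ht3 : t^3 ≤ t := by nlinarith [mul_le_mul_of_nonneg_left ht2 ht.le]
  have hsin : 3*t/4 ≤ Real.sin t := by
    have := Real.sin_gt_sub_cube ht
    nlinarith
  have hsinpos : 0 < Real.sin t := by nlinarith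
  have hcosle : Real.cos t ≤ 1 := Real.cos_le_one t
  have hcosge : 1 - t^2/2 ≤ Real.cos t := Real.one_sub_sq_div_two_le_cos
  have hsinle : Real.sin t ≤ t := (Real.sin_lt ht).le
  have hsinge : t - t^3/4 ≤ Real.sin t := by nlinarith [Real.sin_gt_sub_cube ht, pow_pos ht 3]
  have hd : Real.cos t / Real.sin t - 1/t = (t * Real.cos t - Real.sin t) / (t * Real.sin t) := by
    field_simp
  rw [hd, abs_div, abs_of_pos (by positivity : (0:ℝ) < t * Real.sin t)]
  rw [div_le_iff₀ (by positivity : (0:ℝ) < t * Real.sin t)]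
  rw [abs_le]
  constructor
  · nlinarith
  · nlinarith

lemma rTendsto (p : ℕ) (hp : 0 < p) :
    Tendsto (fun n : ℕ => Real.cos ((p:ℝ)*π/(2*(n:ℝ))) / Real.sin ((p:ℝ)*π/(2*(n:ℝ)))
      - 2*(n:ℝ)/((p:ℝ)*π)) atTop (𝓝 0) := by
  have hpπ : (0:ℝ) < (p:ℝ)*π := by
    have := Real.pi_pos
    have : (0:ℝ) < (p:ℝ) := by exact_mod_cast hp
    positivity
  refine squeeze_zero_norm' ?_ (tendsto_const_div_atTop_nhds_zero_nat ((p:ℝ)*π))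
  · filter_upwards [eventually_ge_atTop (⌈(p:ℝ)*π⌉₊ + 1)] with n hn
    have hn1 : 1 ≤ n := by omega
    have hnR : (0:ℝ) < (n:ℝ) := by exact_mod_cast Nat.lt_of_lt_of_le Nat.zero_lt_one hn1
    have hge : (p:ℝ)*π ≤ (n:ℝ) := by
      calc (p:ℝ)*π ≤ (⌈(p:ℝ)*π⌉₊ : ℝ) := Nat.le_ceil _
        _ ≤ (n:ℝ) := by exact_mod_cast (by omega : ⌈(p:ℝ)*π⌉₊ ≤ n)
    set t : ℝ := (p:ℝ)*π/(2*(n:ℝ)) with htdef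
    have ht : 0 < t := by positivity
    have ht1 : t ≤ 1 := by
      rw [htdef, div_le_one (by positivity)]
      nlinarith
    have hinv : 1/t = 2*(n:ℝ)/((p:ℝ)*π) := by
      rw [htdef]; field_simp
    have := cotBound ht ht1
    rw [hinv] at this
    rw [Real.norm_eq_abs]
    calc |Real.cos t / Real.sin t - 2*(n:ℝ)/((p:ℝ)*π)| ≤ t := this
      _ ≤ (p:ℝ)*π/(n:ℝ) := by
          rw [htdef, div_le_div_iff₀ (by positivity) (by positivity)]
          nlinarith

lemma invT : Tendsto (fun m : ℕ => (2*(m:ℝ)+1)⁻¹) atTop (𝓝 0) := by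
  apply Filter.Tendsto.inv_tendsto_atTop
  apply tendsto_atTop_add_const_right
  exact tendsto_natCast_atTop_atTop.const_mul_atTop two_pos

lemma coefT1 : Tendsto (fun m : ℕ => ((m:ℝ)+1)/(2*(m:ℝ)+1)) atTop (𝓝 (1/2)) := by
  have heq : ∀ m : ℕ, ((m:ℝ)+1)/(2*(m:ℝ)+1) = 1/2 + (1/2)*(2*(m:ℝ)+1)⁻¹ := by
    intro m
    have h : (2*(m:ℝ)+1) ≠ 0 := by positivity
    field_simp
    ring
  simp only [heq]
  have h := (tendsto_const_nhds : Tendsto (fun _ : ℕ => (1/2:ℝ)) atTop (𝓝 (1/2))).add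
    (invT.const_mul (1/2:ℝ))
  convert h using 2
  norm_num

lemma coefT2 : Tendsto (fun m : ℕ => (m:ℝ)/(2*(m:ℝ)+1)) atTop (𝓝 (1/2)) := by
  have heq : ∀ m : ℕ, (m:ℝ)/(2*(m:ℝ)+1) = 1/2 - (1/2)*(2*(m:ℝ)+1)⁻¹ := by
    intro m
    have h : (2*(m:ℝ)+1) ≠ 0 := by positivity
    field_simp
    ring
  simp only [heq]
  have h := (tendsto_const_nhds : Tendsto (fun _ : ℕ => (1/2:ℝ)) atTop (𝓝 (1/2))).sub
    (invT.const_mul (1/2:ℝ))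
  convert h using 2
  norm_num

theorem trig_integral_even_q_odd_k (q : ℕ) (hq : Even q) (hpos : 0 < q) :
    (q % 4 = 0 →
      Tendsto (fun m : ℕ =>
        ∑ ℓ ∈ Finset.Icc 1 m,
          ((∫ x in (((ℓ : ℝ) - 1) * π / (2 * (m : ℝ)))..((ℓ : ℝ) * π / (2 * (m : ℝ) + 2)),
              (Real.cos ((q : ℝ) * x) - Real.cos ((q : ℝ) * (2 * (m : ℝ) + 1) * x))) -
           (∫ x in ((ℓ : ℝ) * π / (2 * (m : ℝ) + 2))..((ℓ : ℝ) * π / (2 * (m : ℝ))),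
              (Real.cos ((q : ℝ) * x) - Real.cos ((q : ℝ) * (2 * (m : ℝ) + 1) * x)))))
        atTop (𝓝 0)) ∧
    (q % 4 = 2 →
      Tendsto (fun m : ℕ =>
        ∑ ℓ ∈ Finset.Icc 1 m,
          ((∫ x in (((ℓ : ℝ) - 1) * π / (2 * (m : ℝ)))..((ℓ : ℝ) * π / (2 * (m : ℝ) + 2)),
              (Real.cos ((q : ℝ) * x) - Real.cos ((q : ℝ) * (2 * (m : ℝ) + 1) * x))) -
           (∫ x in ((ℓ : ℝ) * π / (2 * (m : ℝ) + 2))..((ℓ : ℝ) * π / (2 * (m : ℝ))),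
              (Real.cos ((q : ℝ) * x) - Real.cos ((q : ℝ) * (2 * (m : ℝ) + 1) * x)))))
        atTop (𝓝 (16 / ((q : ℝ) ^ 2 * π)))) := by
  obtain ⟨p, hpq⟩ := hq
  have hqp : q = 2*p := by omega
  have hp : 0 < p := by omega
  have hπ : (0:ℝ) < π := Real.pi_pos
  constructor
  · -- q ≡ 0 (mod 4)
    intro h4
    have hpe : Even p := by rw [Nat.even_iff]; omega
    apply Tendsto.congr' (f₁ := fun _ : ℕ => (0:ℝ))
    · filter_upwards [eventually_ge_atTop 1] with m hm
      have hU := sinSumEven p m hpe hm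
      have hT : ∑ ℓ ∈ Finset.Icc 1 m, Real.sin ((ℓ:ℝ) * ((p:ℝ)*π/((m:ℝ)+1))) = 0 := by
        have h := sinSumEven p (m+1) hpe (by omega)
        rw [Finset.sum_Icc_succ_top (by omega : 1 ≤ m+1)] at h
        push_cast at h
        have htop : Real.sin (((m:ℝ)+1) * ((p:ℝ)*π/((m:ℝ)+1))) = 0 := by
          rw [show ((m:ℝ)+1) * ((p:ℝ)*π/((m:ℝ)+1)) = (p:ℝ)*π from by
            field_simp]
          exact Real.sin_nat_mul_pi p
        rw [htop] at h
        linarith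
      rw [sumEval q p m hqp hp hm, hT, hU]
      ring
    · exact tendsto_const_nhds
  · -- q ≡ 2 (mod 4)
    intro h2
    have hodd : Odd p := by rw [Nat.odd_iff]; omega
    have hq0 : (q:ℝ) ≠ 0 := Nat.cast_ne_zero.mpr (by omega)
    have hp0 : ((p:ℝ)) ≠ 0 := Nat.cast_ne_zero.mpr (by omega)
    set r : ℕ → ℝ := fun n => Real.cos ((p:ℝ)*π/(2*(n:ℝ))) / Real.sin ((p:ℝ)*π/(2*(n:ℝ)))
      - 2*(n:ℝ)/((p:ℝ)*π) with hrdef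
    have hr : Tendsto r atTop (𝓝 0) := rTendsto p hp
    have hr1 : Tendsto (fun m : ℕ => r (m+1)) atTop (𝓝 0) :=
      hr.comp (tendsto_add_atTop_nat 1)
    have he : Tendsto (fun m : ℕ =>
        (4/(q:ℝ)) * ((((m:ℝ)+1)/(2*(m:ℝ)+1)) * r (m+1) - ((m:ℝ)/(2*(m:ℝ)+1)) * r m))
        atTop (𝓝 0) := by
      have := ((coefT1.mul hr1).sub (coefT2.mul hr)).const_mul (4/(q:ℝ))
      simpa using this
    apply Tendsto.congr' (f₁ := fun m : ℕ => 16 / ((q : ℝ) ^ 2 * π) +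
        (4/(q:ℝ)) * ((((m:ℝ)+1)/(2*(m:ℝ)+1)) * r (m+1) - ((m:ℝ)/(2*(m:ℝ)+1)) * r m))
    · filter_upwards [eventually_ge_atTop 1] with m hm
      have hM0 : ((m:ℝ)) ≠ 0 := Nat.cast_ne_zero.mpr (by omega)
      have hMpos : (0:ℝ) < (m:ℝ) := by positivity
      have hk : (2*(m:ℝ)+1) ≠ 0 := by positivity
      -- closed forms of the two sums
      have hU : ∑ ℓ ∈ Finset.Icc 1 m, Real.sin ((ℓ:ℝ) * ((p:ℝ)*π/(m:ℝ)))
          = Real.cos ((p:ℝ)*π/(2*(m:ℝ))) / Real.sin ((p:ℝ)*π/(2*(m:ℝ))) :=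
        sinSumOdd p m hodd hm
      have hT : ∑ ℓ ∈ Finset.Icc 1 m, Real.sin ((ℓ:ℝ) * ((p:ℝ)*π/((m:ℝ)+1)))
          = Real.cos ((p:ℝ)*π/(2*((m:ℝ)+1))) / Real.sin ((p:ℝ)*π/(2*((m:ℝ)+1))) := by
        have h := sinSumOdd p (m+1) hodd (by omega)
        rw [Finset.sum_Icc_succ_top (by omega : 1 ≤ m+1)] at h
        push_cast at h
        have htop : Real.sin (((m:ℝ)+1) * ((p:ℝ)*π/((m:ℝ)+1))) = 0 := by
          rw [show ((m:ℝ)+1) * ((p:ℝ)*π/((m:ℝ)+1)) = (p:ℝ)*π from by field_simp]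
          exact Real.sin_nat_mul_pi p
        rw [htop] at h
        linarith
      rw [sumEval q p m hqp hp hm, hT, hU]
      -- express the cotangents via r
      have hrm : Real.cos ((p:ℝ)*π/(2*(m:ℝ))) / Real.sin ((p:ℝ)*π/(2*(m:ℝ)))
          = r m + 2*(m:ℝ)/((p:ℝ)*π) := by
        rw [hrdef]; ring
      have hrm1 : Real.cos ((p:ℝ)*π/(2*((m:ℝ)+1))) / Real.sin ((p:ℝ)*π/(2*((m:ℝ)+1)))
          = r (m+1) + 2*((m:ℝ)+1)/((p:ℝ)*π) := by
        rw [hrdef]; push_cast; ring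
      rw [hrm, hrm1]
      have hqR : (q:ℝ) = 2*(p:ℝ) := by rw [hqp]; push_cast; ring
      rw [hqR]
      field_simp
      ring
    · simpa using tendsto_const_nhds.add he
end

section
/- Let q be an odd positive integer, and for even k = 2m set f_{q,k}(x) = cos(qx) − cos(qkx) and S(k) = Σ_{ℓ=1}^{k/2} ( ∫_{(ℓ−1)·2π/(k−1)}^{ℓ·2π/(k+1)} f_{q,k}(x) dx − ∫_{ℓ·2π/(k+1)}^{ℓ·2π/(k−1)} f_{q,k}(x) dx ). Then, as m → ∞ over the positive integers, S(2m) converges to 8/(q²·π). -/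
set_option maxHeartbeats 2000000

open Real Filter MeasureTheory Topology

lemma my_integral_eval (c d : ℝ) (hc : c ≠ 0) (hd : d ≠ 0) (a b : ℝ) :
    ∫ x in a..b, (Real.cos (c*x) - Real.cos (d*x)) =
      (Real.sin (c*b) - Real.sin (c*a))/c - (Real.sin (d*b) - Real.sin (d*a))/d := by
  have H : ∀ x : ℝ, HasDerivAt (fun y => Real.sin (c*y)/c - Real.sin (d*y)/d)
      (Real.cos (c*x) - Real.cos (d*x)) x := by
    intro x
    have h1 : HasDerivAt (fun y : ℝ => Real.sin (c*y)) (Real.cos (c*x)*c) x := by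
      simpa [Function.comp_def] using (Real.hasDerivAt_sin (c*x)).comp x ((hasDerivAt_id x).const_mul c)
    have h2 : HasDerivAt (fun y : ℝ => Real.sin (d*y)) (Real.cos (d*x)*d) x := by
      simpa [Function.comp_def] using (Real.hasDerivAt_sin (d*x)).comp x ((hasDerivAt_id x).const_mul d)
    have := (h1.div_const c).sub (h2.div_const d)
    convert this using 1
    all_goals try rfl
    field_simp
  rw [intervalIntegral.integral_eq_sub_of_hasDerivAt (fun x _ => H x)
    (((Real.continuous_cos.comp (continuous_const.mul continuous_id)).sub
      (Real.continuous_cos.comp (continuous_const.mul continuous_id))).intervalIntegrable a b)]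
  ring

lemma my_sum_shift (g : ℕ → ℝ) (m : ℕ) :
    ∑ ℓ ∈ Finset.Icc 1 m, g (ℓ-1) = g 0 - g m + ∑ ℓ ∈ Finset.Icc 1 m, g ℓ := by
  induction m with
  | zero => simp
  | succ n ih =>
      rw [Finset.sum_Icc_succ_top (Nat.le_add_left 1 n), Finset.sum_Icc_succ_top (Nat.le_add_left 1 n), ih]
      simp; ring

lemma my_sum_sin (θ : ℝ) (m : ℕ) :
    2 * Real.sin (θ/2) * ∑ ℓ ∈ Finset.Icc 1 m, Real.sin (ℓ*θ) =
      Real.cos (θ/2) - Real.cos ((2*(m:ℝ)+1)*(θ/2)) := by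
  induction m with
  | zero => simp
  | succ n ih =>
      rw [Finset.sum_Icc_succ_top (Nat.le_add_left 1 n), mul_add, ih]
      have : Real.cos ((2*(n:ℝ)+1)*(θ/2)) - Real.cos ((2*((n:ℝ)+1)+1)*(θ/2))
          = 2 * Real.sin (θ/2) * Real.sin ((n+1)*θ) := by
        rw [Real.cos_sub_cos,
          show ((2*(n:ℝ)+1)*(θ/2) + (2*((n:ℝ)+1)+1)*(θ/2))/2 = ((n:ℝ)+1)*θ by ring,
          show ((2*(n:ℝ)+1)*(θ/2) - (2*((n:ℝ)+1)+1)*(θ/2))/2 = -(θ/2) by ring,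
          Real.sin_neg]
        ring
      push_cast
      push_cast at this
      linarith [this]

lemma my_claim2 (y : ℝ) (hs : Real.sin y ≠ 0) (hc : Real.cos y ≠ 0) :
    (Real.cos (2*y) + 1)/Real.sin (2*y) = Real.cos y / Real.sin y := by
  rw [Real.cos_two_mul, Real.sin_two_mul]
  field_simp
  ring

lemma my_claim3 (y : ℝ) (hs : Real.sin y ≠ 0) (hc : Real.cos y ≠ 0) :
    (Real.cos (2*y) + Real.cos (2*(2*y)))/Real.sin (2*y) + Real.sin (2*y)
      = Real.cos (2*y) * Real.cos y / Real.sin y := by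
  have hcc : Real.cos (2*y) + Real.cos (2*(2*y)) = 2 * Real.cos (3*y) * Real.cos y := by
    rw [Real.cos_add_cos, show (2*y + 2*(2*y))/2 = 3*y by ring, show (2*y - 2*(2*y))/2 = -y by ring,
      Real.cos_neg]
  have h3y : Real.cos (3*y) = Real.cos (2*y) * Real.cos y - Real.sin (2*y) * Real.sin y := by
    rw [show 3*y = 2*y + y by ring, Real.cos_add]
  rw [hcc, h3y, Real.sin_two_mul]
  field_simp
  ring

lemma my_sinc (g : ℕ → ℝ) (hg : Tendsto g atTop (𝓝 0)) (hne : ∀ᶠ n in atTop, g n ≠ 0) :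
    Tendsto (fun n => Real.sin (g n)/(g n)) atTop (𝓝 1) := by
  have h0 : Tendsto (fun x : ℝ => Real.sin x / x) (𝓝[≠] (0:ℝ)) (𝓝 1) := by
    have h := hasDerivAt_iff_tendsto_slope.mp (Real.hasDerivAt_sin 0)
    rw [Real.cos_zero] at h
    refine h.congr (fun x => ?_)
    simp [slope_fun_def, div_eq_inv_mul]
  exact h0.comp (tendsto_nhdsWithin_iff.mpr ⟨hg, hne.mono (fun n h => by simpa using h)⟩)

theorem trig_integral_odd_q_even_k (q : ℕ) (hq : Odd q) (hpos : 0 < q) :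
    Tendsto (fun m : ℕ =>
      ∑ ℓ ∈ Finset.Icc 1 m,
        ((∫ x in (((ℓ : ℝ) - 1) * 2 * π / (2 * (m : ℝ) - 1))..((ℓ : ℝ) * 2 * π / (2 * (m : ℝ) + 1)),
            (Real.cos ((q : ℝ) * x) - Real.cos ((q : ℝ) * (2 * (m : ℝ)) * x))) -
         (∫ x in ((ℓ : ℝ) * 2 * π / (2 * (m : ℝ) + 1))..((ℓ : ℝ) * 2 * π / (2 * (m : ℝ) - 1)),
            (Real.cos ((q : ℝ) * x) - Real.cos ((q : ℝ) * (2 * (m : ℝ)) * x)))))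
      atTop (𝓝 (8 / ((q : ℝ) ^ 2 * π))) := by
  have hπ := Real.pi_pos
  have hqR : (0:ℝ) < (q:ℝ) := by exact_mod_cast hpos
  have hq1 : (1:ℝ) ≤ (q:ℝ) := by exact_mod_cast hpos
  obtain ⟨j, hj⟩ := hq
  have hjR : (q:ℝ) = 2*(j:ℝ)+1 := by
    rw [hj]; push_cast; ring
  have key : (fun m : ℕ =>
      ∑ ℓ ∈ Finset.Icc 1 m,
        ((∫ x in (((ℓ : ℝ) - 1) * 2 * π / (2 * (m : ℝ) - 1))..((ℓ : ℝ) * 2 * π / (2 * (m : ℝ) + 1)),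
            (Real.cos ((q : ℝ) * x) - Real.cos ((q : ℝ) * (2 * (m : ℝ)) * x))) -
         (∫ x in ((ℓ : ℝ) * 2 * π / (2 * (m : ℝ) + 1))..((ℓ : ℝ) * 2 * π / (2 * (m : ℝ) - 1)),
            (Real.cos ((q : ℝ) * x) - Real.cos ((q : ℝ) * (2 * (m : ℝ)) * x)))))
      =ᶠ[atTop] (fun n : ℕ =>
    4/(π*(q:ℝ)^2) * ((Real.sin (π*(q:ℝ)/(2*(n:ℝ)-1)/2 + π*(q:ℝ)/(2*(n:ℝ)+1)/2)
          /(π*(q:ℝ)/(2*(n:ℝ)-1)/2 + π*(q:ℝ)/(2*(n:ℝ)+1)/2)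
        + Real.sin (π*(q:ℝ)/(2*(n:ℝ)-1)/2 - π*(q:ℝ)/(2*(n:ℝ)+1)/2)
          /(π*(q:ℝ)/(2*(n:ℝ)-1)/2 - π*(q:ℝ)/(2*(n:ℝ)+1)/2))
      * ((π*(q:ℝ)/(2*(n:ℝ)-1)/2)/Real.sin (π*(q:ℝ)/(2*(n:ℝ)-1)/2))
      * ((π*(q:ℝ)/(2*(n:ℝ)+1)/2)/Real.sin (π*(q:ℝ)/(2*(n:ℝ)+1)/2)))
    + π/(2*(n:ℝ)) * (Real.sin (π*(q:ℝ)/(2*(n:ℝ)-1))/(π*(q:ℝ)/(2*(n:ℝ)-1)))) := by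
    filter_upwards [eventually_ge_atTop (q+1)] with m hm
    have hmR : (q:ℝ) + 1 ≤ (m:ℝ) := by exact_mod_cast hm
    set M := (m:ℝ) with hM
    set U := π*(q:ℝ)/(2*M-1) with hU
    set V := π*(q:ℝ)/(2*M+1) with hV
    have hd1 : (0:ℝ) < 2*M-1 := by linarith
    have hd2 : (0:ℝ) < 2*M+1 := by linarith
    have hM0 : (0:ℝ) < M := by linarith
    have hU0 : 0 < U := by rw [hU]; exact div_pos (by positivity) hd1
    have hUπ : U < π := by
      rw [hU, div_lt_iff₀ hd1]; nlinarith
    have hV0 : 0 < V := by rw [hV]; exact div_pos (by positivity) hd2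
    have hVU : V < U := by
      rw [hU, hV]
      exact div_lt_div_of_pos_left (by positivity) hd1 (by linarith)
    have hsU : 0 < Real.sin U := Real.sin_pos_of_pos_of_lt_pi hU0 hUπ
    have hsV : 0 < Real.sin V := Real.sin_pos_of_pos_of_lt_pi hV0 (hVU.trans hUπ)
    have hsU2 : 0 < Real.sin (U/2) :=
      Real.sin_pos_of_pos_of_lt_pi (by linarith) (by linarith)
    have hsV2 : 0 < Real.sin (V/2) :=
      Real.sin_pos_of_pos_of_lt_pi (by linarith) (by linarith)
    have hcU2 : 0 < Real.cos (U/2) :=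
      Real.cos_pos_of_mem_Ioo ⟨by linarith, by linarith⟩
    have hcV2 : 0 < Real.cos (V/2) :=
      Real.cos_pos_of_mem_Ioo ⟨by linarith, by linarith⟩
    -- Step 1: evaluate the integrals
    have step : ∀ ℓ ∈ Finset.Icc 1 m,
        ((∫ x in (((ℓ : ℝ) - 1) * 2 * π / (2 * M - 1))..((ℓ : ℝ) * 2 * π / (2 * M + 1)),
              (Real.cos ((q : ℝ) * x) - Real.cos ((q : ℝ) * (2 * M) * x))) -
           (∫ x in ((ℓ : ℝ) * 2 * π / (2 * M + 1))..((ℓ : ℝ) * 2 * π / (2 * M - 1)),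
              (Real.cos ((q : ℝ) * x) - Real.cos ((q : ℝ) * (2 * M) * x)))) =
        (2/(q:ℝ) + 1/((q:ℝ)*M)) * Real.sin ((ℓ:ℝ)*(2*V))
          - (1/(q:ℝ) - 1/(2*(q:ℝ)*M)) * (Real.sin (((ℓ:ℝ)-1)*(2*U)) + Real.sin ((ℓ:ℝ)*(2*U))) := by
      intro ℓ hℓ
      obtain ⟨hℓ1, hℓm⟩ := Finset.mem_Icc.mp hℓ
      rw [my_integral_eval ((q:ℝ)) ((q:ℝ)*(2*M)) (ne_of_gt hqR) (by positivity) _ _,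
          my_integral_eval ((q:ℝ)) ((q:ℝ)*(2*M)) (ne_of_gt hqR) (by positivity) _ _]
      have p1 : Real.sin ((q:ℝ) * ((ℓ:ℝ) * 2 * π / (2*M+1))) = Real.sin ((ℓ:ℝ)*(2*V)) := by
        rw [hV]; congr 1; field_simp
      have p2 : Real.sin ((q:ℝ)*(2*M) * ((ℓ:ℝ) * 2 * π / (2*M+1))) = - Real.sin ((ℓ:ℝ)*(2*V)) := by
        have e : (q:ℝ)*(2*M) * ((ℓ:ℝ) * 2 * π / (2*M+1)) = ((q*ℓ : ℕ):ℤ) * (2*π) - (ℓ:ℝ)*(2*V) := by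
          rw [hV]; push_cast; rw [hM]; field_simp; ring
        rw [e, Real.sin_int_mul_two_pi_sub]
      have p3 : Real.sin ((q:ℝ) * (((ℓ:ℝ)-1) * 2 * π / (2*M-1))) = Real.sin (((ℓ:ℝ)-1)*(2*U)) := by
        rw [hU]; congr 1; field_simp
      have p4 : Real.sin ((q:ℝ)*(2*M) * (((ℓ:ℝ)-1) * 2 * π / (2*M-1)))
          = Real.sin (((ℓ:ℝ)-1)*(2*U)) := by
        have e : (q:ℝ)*(2*M) * (((ℓ:ℝ)-1) * 2 * π / (2*M-1))
            = ((ℓ:ℝ)-1)*(2*U) + ((q*(ℓ-1) : ℕ):ℤ) * (2*π) := by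
          rw [hU]; push_cast [Nat.cast_sub hℓ1]; rw [hM]; field_simp [(by rw [← hM]; exact ne_of_gt hd1 : (2*(m:ℝ)-1) ≠ 0)]; ring
        rw [e, Real.sin_add_int_mul_two_pi]
      have p5 : Real.sin ((q:ℝ) * ((ℓ:ℝ) * 2 * π / (2*M-1))) = Real.sin ((ℓ:ℝ)*(2*U)) := by
        rw [hU]; congr 1; field_simp
      have p6 : Real.sin ((q:ℝ)*(2*M) * ((ℓ:ℝ) * 2 * π / (2*M-1))) = Real.sin ((ℓ:ℝ)*(2*U)) := by
        have e : (q:ℝ)*(2*M) * ((ℓ:ℝ) * 2 * π / (2*M-1))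
            = (ℓ:ℝ)*(2*U) + ((q*ℓ : ℕ):ℤ) * (2*π) := by
          rw [hU]; push_cast; rw [hM]; field_simp [(by rw [← hM]; exact ne_of_gt hd1 : (2*(m:ℝ)-1) ≠ 0)]; ring
        rw [e, Real.sin_add_int_mul_two_pi]
      rw [p1, p2, p3, p4, p5, p6]
      field_simp
      ring
    rw [Finset.sum_congr rfl step]
    -- shift the (ℓ-1) sum
    have shift : ∑ ℓ ∈ Finset.Icc 1 m, Real.sin (((ℓ:ℝ)-1)*(2*U))
        = Real.sin (((0:ℕ):ℝ)*(2*U)) - Real.sin (((m:ℕ):ℝ)*(2*U))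
          + ∑ ℓ ∈ Finset.Icc 1 m, Real.sin ((ℓ:ℝ)*(2*U)) := by
      calc ∑ ℓ ∈ Finset.Icc 1 m, Real.sin (((ℓ:ℝ)-1)*(2*U))
          = ∑ ℓ ∈ Finset.Icc 1 m, (fun n : ℕ => Real.sin ((n:ℝ)*(2*U))) (ℓ-1) := by
            refine Finset.sum_congr rfl (fun ℓ hℓ => ?_)
            obtain ⟨h1, _⟩ := Finset.mem_Icc.mp hℓ
            simp only
            congr 2
            rw [Nat.cast_sub h1]
            simp
        _ = _ := my_sum_shift (fun n : ℕ => Real.sin ((n:ℝ)*(2*U))) m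
    simp only [Nat.cast_zero, zero_mul, Real.sin_zero, zero_sub] at shift
    -- closed form for the V-sum
    have h2 := my_sum_sin (2*V) m
    rw [show (2*V)/2 = V by ring] at h2
    have harg2 : (2*M+1)*V = (j:ℝ)*(2*π) + π := by
      rw [hV, hjR, hM]; field_simp
    rw [harg2, Real.cos_nat_mul_two_pi_add_pi] at h2
    have hT2 : ∑ ℓ ∈ Finset.Icc 1 m, Real.sin ((ℓ:ℝ)*(2*V)) = (Real.cos V + 1)/(2*Real.sin V) := by
      rw [eq_div_iff (by positivity)]
      linear_combination h2
    -- closed form for the U-sum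
    have h1 := my_sum_sin (2*U) m
    rw [show (2*U)/2 = U by ring] at h1
    have harg1 : (2*M+1)*U = (π + 2*U) + ((j:ℤ):ℝ)*(2*π) := by
      rw [hU, hjR, hM]; push_cast; field_simp [(by rw [← hM]; exact ne_of_gt hd1 : (2*(m:ℝ)-1) ≠ 0)]; ring
    rw [harg1, Real.cos_add_int_mul_two_pi] at h1
    have hπ2U : Real.cos (π + 2*U) = -Real.cos (2*U) := by rw [Real.cos_add]; simp
    rw [hπ2U] at h1
    have hT1 : ∑ ℓ ∈ Finset.Icc 1 m, Real.sin ((ℓ:ℝ)*(2*U))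
        = (Real.cos U + Real.cos (2*U))/(2*Real.sin U) := by
      rw [eq_div_iff (by positivity)]
      linear_combination h1
    have hsam : Real.sin (((m:ℕ):ℝ)*(2*U)) = -Real.sin U := by
      have e : ((m:ℕ):ℝ)*(2*U) = (π + U) + ((j:ℤ):ℝ)*(2*π) := by
        rw [hU, hjR, hM]; push_cast; linear_combination (π*(2*(j:ℝ)+1)) * mul_inv_cancel₀ (by rw [← hM]; exact ne_of_gt hd1 : (2*(m:ℝ)-1) ≠ 0)
      rw [e, Real.sin_add_int_mul_two_pi, Real.sin_add]; simp
    rw [Finset.sum_sub_distrib, ← Finset.mul_sum, ← Finset.mul_sum, Finset.sum_add_distrib,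
      shift, hsam, hT1, hT2]
    -- claim rewrites
    have c2 := my_claim2 (V/2) (ne_of_gt hsV2) (ne_of_gt hcV2)
    rw [show 2*(V/2) = V by ring] at c2
    have c2' : (Real.cos V + 1)/(2*Real.sin V) = Real.cos (V/2)/(2*Real.sin (V/2)) := by
      rw [show (2*Real.sin V) = Real.sin V * 2 by ring, ← div_div, c2, div_div,
        mul_comm (Real.sin (V/2)) 2]
    have c3 := my_claim3 (U/2) (ne_of_gt hsU2) (ne_of_gt hcU2)
    rw [show 2*(U/2) = U by ring] at c3
    have c3'' : (-(-Real.sin U) + (Real.cos U + Real.cos (2*U))/(2*Real.sin U))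
          + (Real.cos U + Real.cos (2*U))/(2*Real.sin U)
        = Real.cos U * Real.cos (U/2)/Real.sin (U/2) := by
      rw [← c3]
      field_simp
      ring
    rw [c2', c3'']
    -- expand into half-angle atoms
    have eU1 : Real.sin U = 2*Real.sin (U/2)*Real.cos (U/2) := by
      rw [← Real.sin_two_mul]; congr 1; ring
    have eU2 : Real.cos U = 1 - 2*Real.sin (U/2)^2 := by
      have h := Real.sin_sq_add_cos_sq (U/2)
      have h2' : Real.cos U = 2*Real.cos (U/2)^2 - 1 := by rw [← Real.cos_two_mul]; congr 1; ring
      rw [h2']; nlinarith [h]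
    rw [eU1, eU2, Real.sin_add, Real.sin_sub]
    -- closed forms for the compound denominators
    have hw1 : U/2 + V/2 = π*(q:ℝ)*(2*M)/((2*M-1)*(2*M+1)) := by
      rw [hU, hV]; field_simp; ring
    have hw2 : U/2 - V/2 = π*(q:ℝ)/((2*M-1)*(2*M+1)) := by
      rw [hU, hV]; field_simp; ring
    set s1 := Real.sin (U/2) with hs1
    set c1 := Real.cos (U/2) with hc1
    set s2 := Real.sin (V/2) with hs2
    set c2v := Real.cos (V/2) with hc2v
    have ns1 : s1 ≠ 0 := ne_of_gt hsU2
    have ns2 : s2 ≠ 0 := ne_of_gt hsV2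
    have n1 : (2*M-1) ≠ 0 := ne_of_gt hd1
    have n2 : (2*M+1) ≠ 0 := ne_of_gt hd2
    have n3 : M ≠ 0 := ne_of_gt hM0
    have n4 : π ≠ 0 := ne_of_gt hπ
    have n5 : (q:ℝ) ≠ 0 := ne_of_gt hqR
    rw [hw1, hw2, hU, hV]
    field_simp
    ring
  -- limit of the closed form
  have hA : Tendsto (fun n:ℕ => 2*(n:ℝ)-1) atTop atTop := by
    apply tendsto_atTop_add_const_right
    exact (tendsto_natCast_atTop_atTop (R := ℝ)).const_mul_atTop two_pos
  have hB : Tendsto (fun n:ℕ => 2*(n:ℝ)+1) atTop atTop := by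
    apply tendsto_atTop_add_const_right
    exact (tendsto_natCast_atTop_atTop (R := ℝ)).const_mul_atTop two_pos
  have hUt : Tendsto (fun n:ℕ => π*(q:ℝ)/(2*(n:ℝ)-1)) atTop (𝓝 0) := by
    simpa [div_eq_mul_inv] using ((tendsto_inv_atTop_zero.comp hA).const_mul (π*(q:ℝ)))
  have hVt : Tendsto (fun n:ℕ => π*(q:ℝ)/(2*(n:ℝ)+1)) atTop (𝓝 0) := by
    simpa [div_eq_mul_inv] using ((tendsto_inv_atTop_zero.comp hB).const_mul (π*(q:ℝ)))
  have hU2 : Tendsto (fun n:ℕ => π*(q:ℝ)/(2*(n:ℝ)-1)/2) atTop (𝓝 0) := by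
    simpa using hUt.div_const 2
  have hV2 : Tendsto (fun n:ℕ => π*(q:ℝ)/(2*(n:ℝ)+1)/2) atTop (𝓝 0) := by
    simpa using hVt.div_const 2
  have hW1 : Tendsto (fun n:ℕ => π*(q:ℝ)/(2*(n:ℝ)-1)/2 + π*(q:ℝ)/(2*(n:ℝ)+1)/2) atTop (𝓝 0) := by
    simpa using hU2.add hV2
  have hW2 : Tendsto (fun n:ℕ => π*(q:ℝ)/(2*(n:ℝ)-1)/2 - π*(q:ℝ)/(2*(n:ℝ)+1)/2) atTop (𝓝 0) := by
    simpa using hU2.sub hV2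
  have hMt : Tendsto (fun n:ℕ => π/(2*(n:ℝ))) atTop (𝓝 0) := by
    have h : Tendsto (fun n:ℕ => 2*(n:ℝ)) atTop atTop :=
      (tendsto_natCast_atTop_atTop (R := ℝ)).const_mul_atTop two_pos
    simpa [div_eq_mul_inv] using ((tendsto_inv_atTop_zero.comp h).const_mul π)
  have hpos1 : ∀ᶠ n : ℕ in atTop, (0:ℝ) < 2*(n:ℝ)-1 := hA.eventually_gt_atTop 0
  have hpos2 : ∀ᶠ n : ℕ in atTop, (0:ℝ) < 2*(n:ℝ)+1 := hB.eventually_gt_atTop 0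
  have hUne : ∀ᶠ n : ℕ in atTop, π*(q:ℝ)/(2*(n:ℝ)-1) ≠ 0 := by
    filter_upwards [hpos1] with n h1; positivity
  have hU2ne : ∀ᶠ n : ℕ in atTop, π*(q:ℝ)/(2*(n:ℝ)-1)/2 ≠ 0 := by
    filter_upwards [hpos1] with n h1; positivity
  have hV2ne : ∀ᶠ n : ℕ in atTop, π*(q:ℝ)/(2*(n:ℝ)+1)/2 ≠ 0 := by
    filter_upwards [hpos2] with n h1; positivity
  have hW1ne : ∀ᶠ n : ℕ in atTop, π*(q:ℝ)/(2*(n:ℝ)-1)/2 + π*(q:ℝ)/(2*(n:ℝ)+1)/2 ≠ 0 := by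
    filter_upwards [hpos1, hpos2] with n h1 h2; positivity
  have hW2ne : ∀ᶠ n : ℕ in atTop, π*(q:ℝ)/(2*(n:ℝ)-1)/2 - π*(q:ℝ)/(2*(n:ℝ)+1)/2 ≠ 0 := by
    filter_upwards [hpos1, hpos2] with n h1 h2
    have : π*(q:ℝ)/(2*(n:ℝ)+1) < π*(q:ℝ)/(2*(n:ℝ)-1) := by
      apply div_lt_div_of_pos_left (by positivity) h1
      linarith
    intro h; apply absurd h; intro h'; nlinarith
  have l1 := my_sinc _ hW1 hW1ne
  have l2 := my_sinc _ hW2 hW2ne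
  have l3 := my_sinc _ hU2 hU2ne
  have l4 := my_sinc _ hV2 hV2ne
  have l5 := my_sinc _ hUt hUne
  have l3' : Tendsto (fun n:ℕ => (π*(q:ℝ)/(2*(n:ℝ)-1)/2)/Real.sin (π*(q:ℝ)/(2*(n:ℝ)-1)/2))
      atTop (𝓝 1) := by
    have := l3.inv₀ one_ne_zero
    simpa [inv_div] using this
  have l4' : Tendsto (fun n:ℕ => (π*(q:ℝ)/(2*(n:ℝ)+1)/2)/Real.sin (π*(q:ℝ)/(2*(n:ℝ)+1)/2))
      atTop (𝓝 1) := by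
    have := l4.inv₀ one_ne_zero
    simpa [inv_div] using this
  have total := ((((l1.add l2).mul l3').mul l4').const_mul (4/(π*(q:ℝ)^2))).add (hMt.mul l5)
  have hval : (8:ℝ) / ((q : ℝ) ^ 2 * π) = 4/(π*(q:ℝ)^2) * ((1+1)*1*1) + 0*1 := by
    field_simp; ring
  rw [hval]
  exact total.congr' key.symm
end

section
/- Let q be an even positive integer, and for even k = 2m set f_{q,k}(x) = cos(qx) − cos(qkx) and S(k) = Σ_{ℓ=1}^{k/2} ( ∫_{(ℓ−1)π/(k−1)}^{ℓπ/(k+1)} f_{q,k}(x) dx − ∫_{ℓπ/(k+1)}^{ℓπ/(k−1)} f_{q,k}(x) dx ). Then, as m → ∞ over the positive integers, S(2m) converges to 0 if q ≡ 0 (mod 4), and to 16/(q²·π) if q ≡ 2 (mod 4). -/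
open Real Filter MeasureTheory Topology

noncomputable def Fa (q k x : ℝ) : ℝ := Real.sin (q*x)/q - Real.sin (q*k*x)/(q*k)

lemma cos_integrable (c a b : ℝ) :
    IntervalIntegrable (fun x => Real.cos (c*x)) MeasureTheory.volume a b := by
  apply Continuous.intervalIntegrable
  exact Real.continuous_cos.comp (continuous_const.mul continuous_id)

lemma integral_eval (q k a b : ℝ) (hq : q ≠ 0) (hk : k ≠ 0) :
    (∫ x in a..b, (Real.cos (q*x) - Real.cos (q*k*x))) = Fa q k b - Fa q k a := by
  have hint : ∀ c : ℝ, c ≠ 0 → ∀ a b : ℝ,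
      ∫ x in a..b, Real.cos (c*x) = (Real.sin (c*b) - Real.sin (c*a))/c := by
    intro c hc a b
    rw [intervalIntegral.integral_comp_mul_left (fun x => Real.cos x) hc, integral_cos]
    simp only [smul_eq_mul]
    ring
  have hqk : q*k ≠ 0 := mul_ne_zero hq hk
  rw [intervalIntegral.integral_sub (cos_integrable q a b) (cos_integrable (q*k) a b),
    hint q hq, hint (q*k) hqk]
  simp only [Fa]
  ring

lemma sin_even_pi_sub (n : ℕ) (hn : Even n) (y : ℝ) :
    Real.sin ((n:ℝ)*π - y) = - Real.sin y := by
  obtain ⟨r, hr⟩ := hn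
  have h1 : (n:ℝ)*π - y = (r:ℝ)*(2*π) - y := by rw [hr]; push_cast; ring
  rw [h1, Real.sin_nat_mul_two_pi_sub]

lemma sin_even_pi_add (n : ℕ) (hn : Even n) (y : ℝ) :
    Real.sin ((n:ℝ)*π + y) = Real.sin y := by
  obtain ⟨r, hr⟩ := hn
  have h1 : (n:ℝ)*π + y = y + (r:ℝ)*(2*π) := by rw [hr]; push_cast; ring
  rw [h1, Real.sin_add_nat_mul_two_pi]

lemma sum_sin_mul (θ : ℝ) (n : ℕ) :
    (∑ ℓ ∈ Finset.Icc 1 n, Real.sin ((ℓ:ℝ) * θ)) * (2 * Real.sin (θ/2)) =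
      Real.cos (θ/2) - Real.cos ((2*(n:ℝ)+1) * (θ/2)) := by
  induction n with
  | zero => simp
  | succ n ih =>
    rw [Finset.sum_Icc_succ_top (by omega : 1 ≤ n+1), add_mul, ih]
    have key : Real.sin ((n+1:ℕ) * θ) * (2 * Real.sin (θ/2)) =
        Real.cos ((2*(n:ℝ)+1) * (θ/2)) - Real.cos ((2*((n:ℕ)+1:ℝ)+1) * (θ/2)) := by
      rw [Real.cos_sub_cos]
      push_cast
      rw [show (2*(n:ℝ)+1) * (θ/2) + (2*((n:ℝ)+1)+1) * (θ/2) = 2*(((n:ℝ)+1)*θ) by ring,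
        show ((2*(n:ℝ)+1) * (θ/2) - (2*((n:ℝ)+1)+1) * (θ/2)) = 2*(-(θ/2)) by ring]
      rw [show (2*(((n:ℝ)+1)*θ))/2 = ((n:ℝ)+1)*θ by ring, show (2*(-(θ/2)))/2 = -(θ/2) by ring,
        Real.sin_neg]
      ring
    push_cast at key ⊢
    rw [key]
    ring

lemma sum_shift (g : ℕ → ℝ) (m : ℕ) :
    ∑ ℓ ∈ Finset.Icc 1 m, g (ℓ-1) = (∑ ℓ ∈ Finset.Icc 1 m, g ℓ) + g 0 - g m := by
  induction m with
  | zero => simp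
  | succ m ih =>
    rw [Finset.sum_Icc_succ_top (by omega : 1 ≤ m+1), Finset.sum_Icc_succ_top (by omega : 1 ≤ m+1), ih]
    simp
    ring

lemma Fa_B (q m ℓ : ℕ) (hq : Even q) (h0 : 0 < q) (hm : 0 < m) :
    Fa q (2*(m:ℝ)) ((ℓ:ℝ)*π/(2*(m:ℝ)+1)) =
      (1/(q:ℝ) + 1/(q*(2*m))) * Real.sin ((q:ℝ)*ℓ*π/(2*(m:ℝ)+1)) := by
  have hq0 : (q:ℝ) ≠ 0 := Nat.cast_ne_zero.mpr h0.ne'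
  have hm0 : (m:ℝ) ≠ 0 := Nat.cast_ne_zero.mpr hm.ne'
  have hden : (2*(m:ℝ)+1) ≠ 0 := by positivity
  have e : (q:ℝ)*(2*(m:ℝ))*((ℓ:ℝ)*π/(2*(m:ℝ)+1)) =
      ((q*ℓ:ℕ):ℝ)*π - (q:ℝ)*ℓ*π/(2*(m:ℝ)+1) := by
    push_cast; field_simp; ring
  have e2 : (q:ℝ)*((ℓ:ℝ)*π/(2*(m:ℝ)+1)) = (q:ℝ)*ℓ*π/(2*(m:ℝ)+1) := by ring
  rw [Fa, e, e2, sin_even_pi_sub _ (hq.mul_right ℓ)]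
  field_simp
  ring

lemma Fa_A (q m j : ℕ) (hq : Even q) (h0 : 0 < q) (hm : 0 < m) :
    Fa q (2*(m:ℝ)) ((j:ℝ)*π/(2*(m:ℝ)-1)) =
      (1/(q:ℝ) - 1/(q*(2*m))) * Real.sin ((q:ℝ)*j*π/(2*(m:ℝ)-1)) := by
  have hq0 : (q:ℝ) ≠ 0 := Nat.cast_ne_zero.mpr h0.ne'
  have hm0 : (m:ℝ) ≠ 0 := Nat.cast_ne_zero.mpr hm.ne'
  have hm1 : (1:ℝ) ≤ (m:ℝ) := by exact_mod_cast hm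
  have hden : (2*(m:ℝ)-1) ≠ 0 := by nlinarith
  have e : (q:ℝ)*(2*(m:ℝ))*((j:ℝ)*π/(2*(m:ℝ)-1)) =
      ((q*j:ℕ):ℝ)*π + (q:ℝ)*j*π/(2*(m:ℝ)-1) := by
    push_cast; field_simp; ring
  have e2 : (q:ℝ)*((j:ℝ)*π/(2*(m:ℝ)-1)) = (q:ℝ)*j*π/(2*(m:ℝ)-1) := by ring
  rw [Fa, e, e2, sin_even_pi_add _ (hq.mul_right j)]
  field_simp

lemma sum_sigma (q m : ℕ) (h0 : 0 < q) (hm : q ≤ m) :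
    ∑ ℓ ∈ Finset.Icc 1 m, Real.sin ((q:ℝ)*ℓ*π/(2*(m:ℝ)+1)) =
      (Real.cos ((q:ℝ)*π/(2*(2*(m:ℝ)+1))) - Real.cos ((q:ℝ)*π/2)) /
        (2 * Real.sin ((q:ℝ)*π/(2*(2*(m:ℝ)+1)))) := by
  have hq1 : (1:ℝ) ≤ (q:ℝ) := by exact_mod_cast h0
  have hqm : (q:ℝ) ≤ (m:ℝ) := by exact_mod_cast hm
  have hv0 : 0 < (q:ℝ)*π/(2*(2*(m:ℝ)+1)) := by positivity
  have hvπ : (q:ℝ)*π/(2*(2*(m:ℝ)+1)) < π := by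
    rw [div_lt_iff₀ (by positivity)]
    nlinarith [pi_pos]
  have hsin : 0 < Real.sin ((q:ℝ)*π/(2*(2*(m:ℝ)+1))) :=
    Real.sin_pos_of_pos_of_lt_pi hv0 hvπ
  have hsum := sum_sin_mul ((q:ℝ)*π/(2*(m:ℝ)+1)) m
  have e1 : ((q:ℝ)*π/(2*(m:ℝ)+1))/2 = (q:ℝ)*π/(2*(2*(m:ℝ)+1)) := by
    rw [div_div]; ring_nf
  have e2 : (2*(m:ℝ)+1) * (((q:ℝ)*π/(2*(m:ℝ)+1))/2) = (q:ℝ)*π/2 := by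
    field_simp
  have e3 : ∀ ℓ : ℕ, (ℓ:ℝ) * ((q:ℝ)*π/(2*(m:ℝ)+1)) = (q:ℝ)*ℓ*π/(2*(m:ℝ)+1) := by
    intro ℓ; ring
  rw [e2, e1] at hsum
  simp only [e3] at hsum
  rw [eq_div_iff (by positivity : 2 * Real.sin ((q:ℝ)*π/(2*(2*(m:ℝ)+1))) ≠ 0)]
  exact hsum

lemma sum_tau (q m : ℕ) (h0 : 0 < q) (hm : q ≤ m) :
    ∑ ℓ ∈ Finset.Icc 1 (m-1), Real.sin ((q:ℝ)*ℓ*π/(2*(m:ℝ)-1)) =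
      (Real.cos ((q:ℝ)*π/(2*(2*(m:ℝ)-1))) - Real.cos ((q:ℝ)*π/2)) /
        (2 * Real.sin ((q:ℝ)*π/(2*(2*(m:ℝ)-1)))) := by
  have hq1 : (1:ℝ) ≤ (q:ℝ) := by exact_mod_cast h0
  have hqm : (q:ℝ) ≤ (m:ℝ) := by exact_mod_cast hm
  have hm1 : (1:ℝ) ≤ (m:ℝ) := le_trans hq1 hqm
  have hd : (0:ℝ) < 2*(m:ℝ)-1 := by nlinarith
  have hv0 : 0 < (q:ℝ)*π/(2*(2*(m:ℝ)-1)) := by positivity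
  have hvπ : (q:ℝ)*π/(2*(2*(m:ℝ)-1)) < π := by
    rw [div_lt_iff₀ (by positivity)]
    nlinarith [pi_pos]
  have hsin : 0 < Real.sin ((q:ℝ)*π/(2*(2*(m:ℝ)-1))) :=
    Real.sin_pos_of_pos_of_lt_pi hv0 hvπ
  have hsum := sum_sin_mul ((q:ℝ)*π/(2*(m:ℝ)-1)) (m-1)
  have hcast : ((m-1:ℕ):ℝ) = (m:ℝ)-1 := by
    have : 1 ≤ m := by exact_mod_cast le_trans hq1 hqm
    push_cast [this]; ring
  rw [hcast] at hsum
  have e1 : ((q:ℝ)*π/(2*(m:ℝ)-1))/2 = (q:ℝ)*π/(2*(2*(m:ℝ)-1)) := by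
    rw [div_div]; ring_nf
  have e2 : (2*((m:ℝ)-1)+1) * (((q:ℝ)*π/(2*(m:ℝ)-1))/2) = (q:ℝ)*π/2 := by
    field_simp; ring
  have e3 : ∀ ℓ : ℕ, (ℓ:ℝ) * ((q:ℝ)*π/(2*(m:ℝ)-1)) = (q:ℝ)*ℓ*π/(2*(m:ℝ)-1) := by
    intro ℓ; ring
  rw [e2, e1] at hsum
  simp only [e3] at hsum
  rw [eq_div_iff (by positivity : 2 * Real.sin ((q:ℝ)*π/(2*(2*(m:ℝ)-1))) ≠ 0)]
  exact hsum

lemma S_closed (q m : ℕ) (hq : Even q) (h0 : 0 < q) (hm : q ≤ m) :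
    (∑ ℓ ∈ Finset.Icc 1 m,
          ((∫ x in (((ℓ : ℝ) - 1) * π / (2 * (m : ℝ) - 1))..((ℓ : ℝ) * π / (2 * (m : ℝ) + 1)),
              (Real.cos ((q : ℝ) * x) - Real.cos ((q : ℝ) * (2 * (m : ℝ)) * x))) -
           (∫ x in ((ℓ : ℝ) * π / (2 * (m : ℝ) + 1))..((ℓ : ℝ) * π / (2 * (m : ℝ) - 1)),
              (Real.cos ((q : ℝ) * x) - Real.cos ((q : ℝ) * (2 * (m : ℝ)) * x))))) =
      (2*(1/(q:ℝ) + 1/(q*(2*m)))) *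
        ((Real.cos ((q:ℝ)*π/(2*(2*(m:ℝ)+1))) - Real.cos ((q:ℝ)*π/2)) /
          (2 * Real.sin ((q:ℝ)*π/(2*(2*(m:ℝ)+1)))))
      - (2*(1/(q:ℝ) - 1/(q*(2*m)))) *
        ((Real.cos ((q:ℝ)*π/(2*(2*(m:ℝ)-1))) - Real.cos ((q:ℝ)*π/2)) /
          (2 * Real.sin ((q:ℝ)*π/(2*(2*(m:ℝ)-1)))))
      - (1/(q:ℝ) - 1/(q*(2*m))) * Real.sin ((q:ℝ)*m*π/(2*(m:ℝ)-1)) := by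
  have hm1 : 1 ≤ m := le_trans h0 hm
  have hq0 : (q:ℝ) ≠ 0 := Nat.cast_ne_zero.mpr h0.ne'
  have hm0 : (m:ℝ) ≠ 0 := Nat.cast_ne_zero.mpr (by omega : m ≠ 0)
  have hk0 : (2*(m:ℝ)) ≠ 0 := by
    simp only [ne_eq, mul_eq_zero]; push_neg; exact ⟨two_ne_zero, hm0⟩
  have step1 : ∀ ℓ ∈ Finset.Icc 1 m,
      ((∫ x in (((ℓ : ℝ) - 1) * π / (2 * (m : ℝ) - 1))..((ℓ : ℝ) * π / (2 * (m : ℝ) + 1)),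
          (Real.cos ((q : ℝ) * x) - Real.cos ((q : ℝ) * (2 * (m : ℝ)) * x))) -
       (∫ x in ((ℓ : ℝ) * π / (2 * (m : ℝ) + 1))..((ℓ : ℝ) * π / (2 * (m : ℝ) - 1)),
          (Real.cos ((q : ℝ) * x) - Real.cos ((q : ℝ) * (2 * (m : ℝ)) * x)))) =
      (2*(1/(q:ℝ) + 1/(q*(2*m)))) * Real.sin ((q:ℝ)*ℓ*π/(2*(m:ℝ)+1))
        - (1/(q:ℝ) - 1/(q*(2*m))) * Real.sin ((q:ℝ)*(ℓ-1:ℕ)*π/(2*(m:ℝ)-1))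
        - (1/(q:ℝ) - 1/(q*(2*m))) * Real.sin ((q:ℝ)*ℓ*π/(2*(m:ℝ)-1)) := by
    intro ℓ hℓ
    have hℓ1 : 1 ≤ ℓ := (Finset.mem_Icc.mp hℓ).1
    have hc : ((ℓ:ℝ) - 1) = ((ℓ-1:ℕ):ℝ) := by push_cast [hℓ1]; ring
    rw [integral_eval _ _ _ _ hq0 hk0, integral_eval _ _ _ _ hq0 hk0, hc,
      Fa_B q m ℓ hq h0 (by omega), Fa_A q m (ℓ-1) hq h0 (by omega),
      Fa_A q m ℓ hq h0 (by omega)]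
    ring
  rw [Finset.sum_congr rfl step1]
  rw [Finset.sum_sub_distrib, Finset.sum_sub_distrib, ← Finset.mul_sum, ← Finset.mul_sum,
    ← Finset.mul_sum]
  rw [sum_shift (fun j : ℕ => Real.sin ((q:ℝ)*j*π/(2*(m:ℝ)-1))) m]
  have hg0 : Real.sin ((q:ℝ)*(0:ℕ)*π/(2*(m:ℝ)-1)) = 0 := by
    simp
  have hsplit : ∑ ℓ ∈ Finset.Icc 1 m, Real.sin ((q:ℝ)*ℓ*π/(2*(m:ℝ)-1)) =
      (∑ ℓ ∈ Finset.Icc 1 (m-1), Real.sin ((q:ℝ)*ℓ*π/(2*(m:ℝ)-1)))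
        + Real.sin ((q:ℝ)*m*π/(2*(m:ℝ)-1)) := by
    conv_lhs => rw [show m = (m-1)+1 from by omega]
    rw [Finset.sum_Icc_succ_top (by omega : 1 ≤ (m-1)+1)]
    rw [show (m-1)+1 = m from by omega]
  rw [sum_sigma q m h0 hm] at *
  rw [hsplit, sum_tau q m h0 hm]
  simp only [hg0]
  ring

lemma tendsto_2m1_atTop : Tendsto (fun m : ℕ => 2*(m:ℝ)+1) atTop atTop := by
  apply tendsto_atTop_add_const_right
  exact (tendsto_natCast_atTop_atTop).const_mul_atTop two_pos

lemma tendsto_2m1'_atTop : Tendsto (fun m : ℕ => 2*(m:ℝ)-1) atTop atTop := by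
  apply tendsto_atTop_add_const_right
  exact (tendsto_natCast_atTop_atTop).const_mul_atTop two_pos

lemma tendsto_2m_atTop : Tendsto (fun m : ℕ => 2*(m:ℝ)) atTop atTop :=
  (tendsto_natCast_atTop_atTop).const_mul_atTop two_pos

lemma tendsto_inv_2m1 : Tendsto (fun m : ℕ => 1/(2*(m:ℝ)+1)) atTop (𝓝 0) := by
  exact tendsto_2m1_atTop.inv_tendsto_atTop.congr fun n => (one_div _).symm

lemma tendsto_inv_2m1' : Tendsto (fun m : ℕ => 1/(2*(m:ℝ)-1)) atTop (𝓝 0) := by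
  exact tendsto_2m1'_atTop.inv_tendsto_atTop.congr fun n => (one_div _).symm

lemma tendsto_inv_2m : Tendsto (fun m : ℕ => 1/(2*(m:ℝ))) atTop (𝓝 0) :=
  tendsto_2m_atTop.inv_tendsto_atTop.congr fun n => (one_div _).symm

lemma tendsto_w (c : ℝ) : Tendsto (fun m : ℕ => c/(4*(2*(m:ℝ)+1))) atTop (𝓝 0) := by
  have h : Tendsto (fun m : ℕ => 4*(2*(m:ℝ)+1)) atTop atTop :=
    tendsto_2m1_atTop.const_mul_atTop four_pos
  simpa using Tendsto.div_atTop (tendsto_const_nhds (x := c)) h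

lemma tendsto_w' (c : ℝ) : Tendsto (fun m : ℕ => c/(4*(2*(m:ℝ)-1))) atTop (𝓝 0) := by
  have h : Tendsto (fun m : ℕ => 4*(2*(m:ℝ)-1)) atTop atTop :=
    tendsto_2m1'_atTop.const_mul_atTop four_pos
  simpa using Tendsto.div_atTop (tendsto_const_nhds (x := c)) h

lemma tendsto_sinc {x : ℕ → ℝ} (h0 : Tendsto x atTop (𝓝 0))
    (hne : ∀ᶠ n in atTop, x n ≠ 0) :
    Tendsto (fun n => x n / Real.sin (x n)) atTop (𝓝 1) := by
  have hd : Tendsto (slope Real.sin 0) (𝓝[≠] 0) (𝓝 1) := by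
    have := (Real.hasDerivAt_sin 0)
    rw [hasDerivAt_iff_tendsto_slope] at this
    simpa using this
  have hx : Tendsto x atTop (𝓝[≠] 0) := by
    rw [tendsto_nhdsWithin_iff]
    exact ⟨h0, hne.mono fun n hn => hn⟩
  have h1 : Tendsto (fun n => Real.sin (x n) / x n) atTop (𝓝 1) := by
    have := hd.comp hx
    refine this.congr fun n => ?_
    simp [slope_def_field]
  have := h1.inv₀ one_ne_zero
  simp only [inv_one] at this
  exact this.congr fun n => inv_div _ _

lemma tendsto_tail (q : ℕ) (hq : Even q) :
    Tendsto (fun m : ℕ => Real.sin ((q:ℝ)*m*π/(2*(m:ℝ)-1))) atTop (𝓝 0) := by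
  have hinner : Tendsto (fun m : ℕ => (q:ℝ)*m*π/(2*(m:ℝ)-1)) atTop (𝓝 ((q:ℝ)*π/2)) := by
    have h1 : Tendsto (fun m : ℕ => 2 - 1/(m:ℝ)) atTop (𝓝 2) := by
      have : Tendsto (fun m : ℕ => 1/(m:ℝ)) atTop (𝓝 0) :=
        tendsto_natCast_atTop_atTop.inv_tendsto_atTop.congr fun n => (one_div _).symm
      simpa using (tendsto_const_nhds (x := (2:ℝ))).sub this
    have h2 : Tendsto (fun m : ℕ => (q:ℝ)*π/(2 - 1/(m:ℝ))) atTop (𝓝 ((q:ℝ)*π/2)) :=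
      (tendsto_const_nhds (x := (q:ℝ)*π)).div h1 two_ne_zero
    apply h2.congr'
    filter_upwards [eventually_ge_atTop 1] with m hm
    have hm0 : (m:ℝ) ≠ 0 := Nat.cast_ne_zero.mpr (by omega)
    have hm1 : (1:ℝ) ≤ (m:ℝ) := by exact_mod_cast hm
    have hd : (2*(m:ℝ)-1) ≠ 0 := by nlinarith
    field_simp
  have hs : Real.sin ((q:ℝ)*π/2) = 0 := by
    obtain ⟨r, hr⟩ := hq
    have : (q:ℝ)*π/2 = (r:ℝ)*π := by rw [hr]; push_cast; ring
    rw [this, Real.sin_nat_mul_pi]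
  have := (Real.continuous_sin.tendsto ((q:ℝ)*π/2)).comp hinner
  rwa [hs] at this

lemma cos_qpi2_zero (q : ℕ) (h : q % 4 = 0) : Real.cos ((q:ℝ)*π/2) = 1 := by
  obtain ⟨t, ht⟩ : ∃ t, q = 4*t := ⟨q/4, by omega⟩
  have : (q:ℝ)*π/2 = (t:ℝ)*(2*π) := by rw [ht]; push_cast; ring
  rw [this, Real.cos_nat_mul_two_pi]

lemma cos_qpi2_two (q : ℕ) (h : q % 4 = 2) : Real.cos ((q:ℝ)*π/2) = -1 := by
  obtain ⟨t, ht⟩ : ∃ t, q = 4*t+2 := ⟨q/4, by omega⟩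
  have : (q:ℝ)*π/2 = π + (t:ℝ)*(2*π) := by rw [ht]; push_cast; ring
  rw [this, Real.cos_add_nat_mul_two_pi, Real.cos_pi]

lemma sincos_pos (q : ℕ) (h0 : 0 < q) (d : ℝ) (hd : (q:ℝ) ≤ d) (hd1 : 1 ≤ d) :
    0 < Real.sin ((q:ℝ)*π/(4*d)) ∧ 0 < Real.cos ((q:ℝ)*π/(4*d)) := by
  have hq1 : (1:ℝ) ≤ (q:ℝ) := by exact_mod_cast h0
  have hw0 : 0 < (q:ℝ)*π/(4*d) := by positivity
  have hwlt : (q:ℝ)*π/(4*d) < π/2 := by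
    rw [div_lt_div_iff₀ (by positivity) (by norm_num)]
    nlinarith [pi_pos]
  constructor
  · exact Real.sin_pos_of_pos_of_lt_pi hw0 (lt_trans hwlt (by nlinarith [pi_pos]))
  · exact Real.cos_pos_of_mem_Ioo ⟨by nlinarith [pi_pos], hwlt⟩

lemma half1 (w : ℝ) (hs : Real.sin w ≠ 0) (hc : Real.cos w ≠ 0) :
    (Real.cos (2*w) - 1)/(2*Real.sin (2*w)) = -(Real.sin w/(2*Real.cos w)) := by
  rw [Real.cos_two_mul, Real.sin_two_mul, show Real.cos w^2 = 1 - Real.sin w^2 from by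
    rw [Real.cos_sq']]
  field_simp
  ring

lemma half2 (w : ℝ) (hs : Real.sin w ≠ 0) (hc : Real.cos w ≠ 0) :
    (Real.cos (2*w) + 1)/(2*Real.sin (2*w)) = Real.cos w/(2*Real.sin w) := by
  rw [Real.cos_two_mul, Real.sin_two_mul]
  field_simp
  ring

lemma hsmall (q : ℕ) : Tendsto (fun m : ℕ => 1/((q:ℝ)*(2*(m:ℝ)))) atTop (𝓝 0) := by
  have := ((tendsto_const_nhds (x := 1/(q:ℝ))).mul tendsto_inv_2m)
  rw [mul_zero] at this
  exact this.congr fun m => by rw [div_mul_div_comm]; norm_num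

lemma case0 (q : ℕ) (hq : Even q) (hpos : 0 < q) (h4 : q % 4 = 0) :
      Tendsto (fun m : ℕ =>
        ∑ ℓ ∈ Finset.Icc 1 m,
          ((∫ x in (((ℓ : ℝ) - 1) * π / (2 * (m : ℝ) - 1))..((ℓ : ℝ) * π / (2 * (m : ℝ) + 1)),
              (Real.cos ((q : ℝ) * x) - Real.cos ((q : ℝ) * (2 * (m : ℝ)) * x))) -
           (∫ x in ((ℓ : ℝ) * π / (2 * (m : ℝ) + 1))..((ℓ : ℝ) * π / (2 * (m : ℝ) - 1)),
              (Real.cos ((q : ℝ) * x) - Real.cos ((q : ℝ) * (2 * (m : ℝ)) * x)))))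
        atTop (𝓝 0) := by
  have hq1 : (1:ℝ) ≤ (q:ℝ) := by exact_mod_cast hpos
  -- limits of the pieces
  have hsin1 : Tendsto (fun m : ℕ => Real.sin ((q:ℝ)*π/(4*(2*(m:ℝ)+1)))) atTop (𝓝 0) := by
    simpa [Function.comp_def] using (Real.continuous_sin.tendsto 0).comp (tendsto_w ((q:ℝ)*π))
  have hcos1 : Tendsto (fun m : ℕ => Real.cos ((q:ℝ)*π/(4*(2*(m:ℝ)+1)))) atTop (𝓝 1) := by
    simpa [Function.comp_def] using (Real.continuous_cos.tendsto 0).comp (tendsto_w ((q:ℝ)*π))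
  have hsin2 : Tendsto (fun m : ℕ => Real.sin ((q:ℝ)*π/(4*(2*(m:ℝ)-1)))) atTop (𝓝 0) := by
    simpa [Function.comp_def] using (Real.continuous_sin.tendsto 0).comp (tendsto_w' ((q:ℝ)*π))
  have hcos2 : Tendsto (fun m : ℕ => Real.cos ((q:ℝ)*π/(4*(2*(m:ℝ)-1)))) atTop (𝓝 1) := by
    simpa [Function.comp_def] using (Real.continuous_cos.tendsto 0).comp (tendsto_w' ((q:ℝ)*π))
  have hC1 : Tendsto (fun m : ℕ => 2*(1/(q:ℝ) + 1/(q*(2*(m:ℝ))))) atTop (𝓝 (2*(1/(q:ℝ)+0))) :=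
    ((tendsto_const_nhds (x := 1/(q:ℝ))).add (hsmall q)).const_mul 2
  have hC1' : Tendsto (fun m : ℕ => 2*(1/(q:ℝ) - 1/(q*(2*(m:ℝ))))) atTop (𝓝 (2*(1/(q:ℝ)-0))) :=
    ((tendsto_const_nhds (x := 1/(q:ℝ))).sub (hsmall q)).const_mul 2
  have hC2 : Tendsto (fun m : ℕ => 1/(q:ℝ) - 1/((q:ℝ)*(2*(m:ℝ)))) atTop (𝓝 (1/(q:ℝ)-0)) :=
    (tendsto_const_nhds (x := 1/(q:ℝ))).sub (hsmall q)
  have hG : Tendsto (fun m : ℕ =>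
      (2*(1/(q:ℝ) + 1/(q*(2*(m:ℝ))))) *
        (-(Real.sin ((q:ℝ)*π/(4*(2*(m:ℝ)+1)))/(2*Real.cos ((q:ℝ)*π/(4*(2*(m:ℝ)+1))))))
      - (2*(1/(q:ℝ) - 1/(q*(2*(m:ℝ))))) *
        (-(Real.sin ((q:ℝ)*π/(4*(2*(m:ℝ)-1)))/(2*Real.cos ((q:ℝ)*π/(4*(2*(m:ℝ)-1))))))
      - (1/(q:ℝ) - 1/(q*(2*(m:ℝ)))) * Real.sin ((q:ℝ)*m*π/(2*(m:ℝ)-1))) atTop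
      (𝓝 ((2*(1/(q:ℝ)+0)) * (-(0/(2*1))) - (2*(1/(q:ℝ)-0)) * (-(0/(2*1))) - (1/(q:ℝ)-0) * 0)) := by
    exact ((hC1.mul ((hsin1.div (hcos1.const_mul 2) (by norm_num)).neg)).sub
      (hC1'.mul ((hsin2.div (hcos2.const_mul 2) (by norm_num)).neg))).sub
      (hC2.mul (tendsto_tail q hq))
  have hlim : ((2*(1/(q:ℝ)+0)) * (-(0/(2*1))) - (2*(1/(q:ℝ)-0)) * (-(0/(2*1))) - (1/(q:ℝ)-0) * 0) = 0 := by
    norm_num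
  rw [hlim] at hG
  apply hG.congr'
  filter_upwards [eventually_ge_atTop (max q 1)] with m hm
  have hmq : q ≤ m := le_trans (le_max_left _ _) hm
  have hm1 : 1 ≤ m := le_trans (le_max_right _ _) hm
  have hm1' : (1:ℝ) ≤ (m:ℝ) := by exact_mod_cast hm1
  have hmr : (q:ℝ) ≤ (m:ℝ) := by exact_mod_cast hmq
  have hp1 := sincos_pos q hpos (2*(m:ℝ)+1) (by nlinarith) (by nlinarith)
  have hp2 := sincos_pos q hpos (2*(m:ℝ)-1) (by nlinarith) (by nlinarith)
  have hd1 : (2*(m:ℝ)+1) ≠ 0 := by positivity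
  have hd2 : (2*(m:ℝ)-1) ≠ 0 := by nlinarith
  have e1 : (q:ℝ)*π/(2*(2*(m:ℝ)+1)) = 2*((q:ℝ)*π/(4*(2*(m:ℝ)+1))) := by
    field_simp; ring
  have e2 : (q:ℝ)*π/(2*(2*(m:ℝ)-1)) = 2*((q:ℝ)*π/(4*(2*(m:ℝ)-1))) := by
    field_simp; ring
  rw [S_closed q m hq hpos hmq, cos_qpi2_zero q h4, e1, e2,
    half1 _ hp1.1.ne' hp1.2.ne', half1 _ hp2.1.ne' hp2.2.ne']

lemma tendsto_sinc' {x : ℕ → ℝ} (h0 : Tendsto x atTop (𝓝 0))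
    (hne : ∀ᶠ n in atTop, x n ≠ 0) :
    Tendsto (fun n => Real.sin (x n) / x n) atTop (𝓝 1) := by
  have := (tendsto_sinc h0 hne).inv₀ one_ne_zero
  simp only [inv_one] at this
  exact this.congr fun n => inv_div _ _

set_option maxHeartbeats 2000000 in
lemma case2 (q : ℕ) (hq : Even q) (hpos : 0 < q) (h4 : q % 4 = 2) :
      Tendsto (fun m : ℕ =>
        ∑ ℓ ∈ Finset.Icc 1 m,
          ((∫ x in (((ℓ : ℝ) - 1) * π / (2 * (m : ℝ) - 1))..((ℓ : ℝ) * π / (2 * (m : ℝ) + 1)),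
              (Real.cos ((q : ℝ) * x) - Real.cos ((q : ℝ) * (2 * (m : ℝ)) * x))) -
           (∫ x in ((ℓ : ℝ) * π / (2 * (m : ℝ) + 1))..((ℓ : ℝ) * π / (2 * (m : ℝ) - 1)),
              (Real.cos ((q : ℝ) * x) - Real.cos ((q : ℝ) * (2 * (m : ℝ)) * x)))))
        atTop (𝓝 (16 / ((q : ℝ) ^ 2 * π))) := by
  have hq1 : (1:ℝ) ≤ (q:ℝ) := by exact_mod_cast hpos
  have hq0 : (q:ℝ) ≠ 0 := by positivity
  -- the three sinc-type limits
  have hw1ne : ∀ᶠ m : ℕ in atTop, (q:ℝ)*π/(4*(2*(m:ℝ)+1)) ≠ 0 := by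
    filter_upwards [eventually_ge_atTop 1] with m _
    positivity
  have hw2ne : ∀ᶠ m : ℕ in atTop, (q:ℝ)*π/(4*(2*(m:ℝ)-1)) ≠ 0 := by
    filter_upwards [eventually_ge_atTop 1] with m hm
    have hm1 : (1:ℝ) ≤ (m:ℝ) := by exact_mod_cast hm
    have : (0:ℝ) < 2*(m:ℝ)-1 := by nlinarith
    positivity
  have hdne : ∀ᶠ m : ℕ in atTop, (q:ℝ)*π/(4*(2*(m:ℝ)-1)) - (q:ℝ)*π/(4*(2*(m:ℝ)+1)) ≠ 0 := by
    filter_upwards [eventually_ge_atTop 1] with m hm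
    have hm1 : (1:ℝ) ≤ (m:ℝ) := by exact_mod_cast hm
    have h1 : (0:ℝ) < 2*(m:ℝ)-1 := by nlinarith
    have h2 : (0:ℝ) < 2*(m:ℝ)+1 := by nlinarith
    have : (q:ℝ)*π/(4*(2*(m:ℝ)+1)) < (q:ℝ)*π/(4*(2*(m:ℝ)-1)) := by
      apply div_lt_div_of_pos_left (by positivity) (by positivity)
      nlinarith
    linarith
  have hs1 : Tendsto (fun m : ℕ => ((q:ℝ)*π/(4*(2*(m:ℝ)+1))) /
      Real.sin ((q:ℝ)*π/(4*(2*(m:ℝ)+1)))) atTop (𝓝 1) := tendsto_sinc (tendsto_w _) hw1ne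
  have hs2 : Tendsto (fun m : ℕ => ((q:ℝ)*π/(4*(2*(m:ℝ)-1))) /
      Real.sin ((q:ℝ)*π/(4*(2*(m:ℝ)-1)))) atTop (𝓝 1) := tendsto_sinc (tendsto_w' _) hw2ne
  have hdtend : Tendsto (fun m : ℕ => (q:ℝ)*π/(4*(2*(m:ℝ)-1)) - (q:ℝ)*π/(4*(2*(m:ℝ)+1)))
      atTop (𝓝 0) := by simpa using (tendsto_w' ((q:ℝ)*π)).sub (tendsto_w ((q:ℝ)*π))
  have hsd : Tendsto (fun m : ℕ =>
      Real.sin ((q:ℝ)*π/(4*(2*(m:ℝ)-1)) - (q:ℝ)*π/(4*(2*(m:ℝ)+1))) /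
        ((q:ℝ)*π/(4*(2*(m:ℝ)-1)) - (q:ℝ)*π/(4*(2*(m:ℝ)+1)))) atTop (𝓝 1) :=
    tendsto_sinc' hdtend hdne
  have hcos1 : Tendsto (fun m : ℕ => Real.cos ((q:ℝ)*π/(4*(2*(m:ℝ)+1)))) atTop (𝓝 1) := by
    simpa [Function.comp_def] using (Real.continuous_cos.tendsto 0).comp (tendsto_w ((q:ℝ)*π))
  have hcos2 : Tendsto (fun m : ℕ => Real.cos ((q:ℝ)*π/(4*(2*(m:ℝ)-1)))) atTop (𝓝 1) := by
    simpa [Function.comp_def] using (Real.continuous_cos.tendsto 0).comp (tendsto_w' ((q:ℝ)*π))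
  have hone : Tendsto (fun m : ℕ => (1:ℝ) + 1/(2*(m:ℝ))) atTop (𝓝 (1+0)) :=
    tendsto_const_nhds.add tendsto_inv_2m
  have hone' : Tendsto (fun m : ℕ => (1:ℝ) - 1/(2*(m:ℝ))) atTop (𝓝 (1-0)) :=
    tendsto_const_nhds.sub tendsto_inv_2m
  have hC2 : Tendsto (fun m : ℕ => 1/(q:ℝ) - 1/((q:ℝ)*(2*(m:ℝ)))) atTop (𝓝 (1/(q:ℝ)-0)) :=
    (tendsto_const_nhds (x := 1/(q:ℝ))).sub (hsmall q)
  -- the limit of the product form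
  have hG : Tendsto (fun m : ℕ =>
      (1/(q:ℝ)) * ((Real.sin ((q:ℝ)*π/(4*(2*(m:ℝ)-1)) - (q:ℝ)*π/(4*(2*(m:ℝ)+1))) /
            ((q:ℝ)*π/(4*(2*(m:ℝ)-1)) - (q:ℝ)*π/(4*(2*(m:ℝ)+1))))
          * (((q:ℝ)*π/(4*(2*(m:ℝ)+1))) / Real.sin ((q:ℝ)*π/(4*(2*(m:ℝ)+1))))
          * (((q:ℝ)*π/(4*(2*(m:ℝ)-1))) / Real.sin ((q:ℝ)*π/(4*(2*(m:ℝ)-1))))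
          * (8/((q:ℝ)*π))
        + Real.cos ((q:ℝ)*π/(4*(2*(m:ℝ)+1)))
          * (((q:ℝ)*π/(4*(2*(m:ℝ)+1))) / Real.sin ((q:ℝ)*π/(4*(2*(m:ℝ)+1))))
          * (((1:ℝ) + 1/(2*(m:ℝ))) * (4/((q:ℝ)*π)))
        + Real.cos ((q:ℝ)*π/(4*(2*(m:ℝ)-1)))
          * (((q:ℝ)*π/(4*(2*(m:ℝ)-1))) / Real.sin ((q:ℝ)*π/(4*(2*(m:ℝ)-1))))
          * (((1:ℝ) - 1/(2*(m:ℝ))) * (4/((q:ℝ)*π))))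
      - (1/(q:ℝ) - 1/((q:ℝ)*(2*(m:ℝ)))) * Real.sin ((q:ℝ)*m*π/(2*(m:ℝ)-1)))
      atTop (𝓝 ((1/(q:ℝ)) * (1*1*1*(8/((q:ℝ)*π)) + 1*1*((1+0)*(4/((q:ℝ)*π)))
          + 1*1*((1-0)*(4/((q:ℝ)*π)))) - (1/(q:ℝ)-0)*0)) := by
    exact ((((hsd.mul hs1).mul hs2).mul tendsto_const_nhds |>.add
      ((hcos1.mul hs1).mul (hone.mul tendsto_const_nhds)) |>.add
      ((hcos2.mul hs2).mul (hone'.mul tendsto_const_nhds))).const_mul _).sub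
      (hC2.mul (tendsto_tail q hq))
  have hval : ((1/(q:ℝ)) * (1*1*1*(8/((q:ℝ)*π)) + 1*1*((1+0)*(4/((q:ℝ)*π)))
      + 1*1*((1-0)*(4/((q:ℝ)*π)))) - (1/(q:ℝ)-0)*0) = 16 / ((q:ℝ)^2*π) := by
    field_simp
    ring
  rw [hval] at hG
  apply hG.congr'
  filter_upwards [eventually_ge_atTop (max q 1)] with m hm
  have hmq : q ≤ m := le_trans (le_max_left _ _) hm
  have hm1 : 1 ≤ m := le_trans (le_max_right _ _) hm
  have hm1' : (1:ℝ) ≤ (m:ℝ) := by exact_mod_cast hm1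
  have hmr : (q:ℝ) ≤ (m:ℝ) := by exact_mod_cast hmq
  have hm0 : (m:ℝ) ≠ 0 := by positivity
  have hp1 := sincos_pos q hpos (2*(m:ℝ)+1) (by nlinarith) (by nlinarith)
  have hp2 := sincos_pos q hpos (2*(m:ℝ)-1) (by nlinarith) (by nlinarith)
  have hd1 : (2*(m:ℝ)+1) ≠ 0 := by positivity
  have hd2 : (2*(m:ℝ)-1) ≠ 0 := by nlinarith
  have e1 : (q:ℝ)*π/(2*(2*(m:ℝ)+1)) = 2*((q:ℝ)*π/(4*(2*(m:ℝ)+1))) := by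
    field_simp; ring
  have e2 : (q:ℝ)*π/(2*(2*(m:ℝ)-1)) = 2*((q:ℝ)*π/(4*(2*(m:ℝ)-1))) := by
    field_simp; ring
  have hs1ne := hp1.1.ne'
  have hs2ne := hp2.1.ne'
  have ed : (q:ℝ)*π/(4*(2*(m:ℝ)-1)) - (q:ℝ)*π/(4*(2*(m:ℝ)+1)) =
      (q:ℝ)*π*8/((4*(2*(m:ℝ)-1))*(4*(2*(m:ℝ)+1))) := by
    field_simp; ring
  have r1 : (Real.sin ((q:ℝ)*π/(4*(2*(m:ℝ)-1))) * Real.cos ((q:ℝ)*π/(4*(2*(m:ℝ)+1)))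
        - Real.cos ((q:ℝ)*π/(4*(2*(m:ℝ)-1))) * Real.sin ((q:ℝ)*π/(4*(2*(m:ℝ)+1)))) /
          ((q:ℝ)*π*8/((4*(2*(m:ℝ)-1))*(4*(2*(m:ℝ)+1))))
        * (((q:ℝ)*π/(4*(2*(m:ℝ)+1))) / Real.sin ((q:ℝ)*π/(4*(2*(m:ℝ)+1))))
        * (((q:ℝ)*π/(4*(2*(m:ℝ)-1))) / Real.sin ((q:ℝ)*π/(4*(2*(m:ℝ)-1))))
        * (8/((q:ℝ)*π)) =
      (Real.sin ((q:ℝ)*π/(4*(2*(m:ℝ)-1))) * Real.cos ((q:ℝ)*π/(4*(2*(m:ℝ)+1)))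
        - Real.cos ((q:ℝ)*π/(4*(2*(m:ℝ)-1))) * Real.sin ((q:ℝ)*π/(4*(2*(m:ℝ)+1)))) /
      (Real.sin ((q:ℝ)*π/(4*(2*(m:ℝ)+1))) * Real.sin ((q:ℝ)*π/(4*(2*(m:ℝ)-1)))) := by
    field_simp
  have r2 : Real.cos ((q:ℝ)*π/(4*(2*(m:ℝ)+1)))
        * (((q:ℝ)*π/(4*(2*(m:ℝ)+1))) / Real.sin ((q:ℝ)*π/(4*(2*(m:ℝ)+1))))
        * (((1:ℝ) + 1/(2*(m:ℝ))) * (4/((q:ℝ)*π))) =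
      Real.cos ((q:ℝ)*π/(4*(2*(m:ℝ)+1))) * ((1:ℝ) + 1/(2*(m:ℝ)))
        / ((2*(m:ℝ)+1) * Real.sin ((q:ℝ)*π/(4*(2*(m:ℝ)+1)))) := by
    field_simp
  have r3 : Real.cos ((q:ℝ)*π/(4*(2*(m:ℝ)-1)))
        * (((q:ℝ)*π/(4*(2*(m:ℝ)-1))) / Real.sin ((q:ℝ)*π/(4*(2*(m:ℝ)-1))))
        * (((1:ℝ) - 1/(2*(m:ℝ))) * (4/((q:ℝ)*π))) =
      Real.cos ((q:ℝ)*π/(4*(2*(m:ℝ)-1))) * ((1:ℝ) - 1/(2*(m:ℝ)))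
        / ((2*(m:ℝ)-1) * Real.sin ((q:ℝ)*π/(4*(2*(m:ℝ)-1)))) := by
    field_simp
  rw [S_closed q m hq hpos hmq, cos_qpi2_two q h4, sub_neg_eq_add, sub_neg_eq_add, e1, e2,
    half2 _ hp1.1.ne' hp1.2.ne', half2 _ hp2.1.ne' hp2.2.ne', Real.sin_sub, ed, r1, r2, r3]
  field_simp
  ring

theorem trig_integral_even_q_even_k (q : ℕ) (hq : Even q) (hpos : 0 < q) :
    (q % 4 = 0 →
      Tendsto (fun m : ℕ =>
        ∑ ℓ ∈ Finset.Icc 1 m,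
          ((∫ x in (((ℓ : ℝ) - 1) * π / (2 * (m : ℝ) - 1))..((ℓ : ℝ) * π / (2 * (m : ℝ) + 1)),
              (Real.cos ((q : ℝ) * x) - Real.cos ((q : ℝ) * (2 * (m : ℝ)) * x))) -
           (∫ x in ((ℓ : ℝ) * π / (2 * (m : ℝ) + 1))..((ℓ : ℝ) * π / (2 * (m : ℝ) - 1)),
              (Real.cos ((q : ℝ) * x) - Real.cos ((q : ℝ) * (2 * (m : ℝ)) * x)))))
        atTop (𝓝 0)) ∧
    (q % 4 = 2 →
      Tendsto (fun m : ℕ =>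
        ∑ ℓ ∈ Finset.Icc 1 m,
          ((∫ x in (((ℓ : ℝ) - 1) * π / (2 * (m : ℝ) - 1))..((ℓ : ℝ) * π / (2 * (m : ℝ) + 1)),
              (Real.cos ((q : ℝ) * x) - Real.cos ((q : ℝ) * (2 * (m : ℝ)) * x))) -
           (∫ x in ((ℓ : ℝ) * π / (2 * (m : ℝ) + 1))..((ℓ : ℝ) * π / (2 * (m : ℝ) - 1)),
              (Real.cos ((q : ℝ) * x) - Real.cos ((q : ℝ) * (2 * (m : ℝ)) * x)))))
        atTop (𝓝 (16 / ((q : ℝ) ^ 2 * π)))) := by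
  exact ⟨fun h4 => case0 q hq hpos h4, fun h4 => case2 q hq hpos h4⟩
end
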